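/- arXiv:2402.10112 — 7 statements merged into one kernel-verified Lean document; each statement's English description precedes it below -/
import Mathlib

section
/- Let (X, 𝓕, μ) be a probability space, M a positive integer, 0 ≤ δ < 1, and let {U_i}_{i∈I} be a multicover of X with M layers and error δ. Then for every measurable set V ⊆ X there exists an index i ∈ I such that μ(U_i ∩ V) ≤ μ(U_i)·μ(V)/(1 − δ). -/
open MeasureTheory
open scoped ENNReal

/-- A family `U i` of measurable sets in a probability space is a *multicover* with `M` layers
and error `δ` if the sum of the indicator functions is a.e. at most `M`, and the sum of the
measures is at least `(1 - δ) * M`. -/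
def IsMulticover {X : Type*} [MeasurableSpace X] (μ : Measure X) {I : Type*}
    (U : I → Set X) (M : ℕ) (δ : ℝ) : Prop :=
  (∀ i, MeasurableSet (U i)) ∧
  (∀ᵐ x ∂μ, ∑' i, (U i).indicator (fun _ => (1 : ℝ≥0∞)) x ≤ (M : ℝ≥0∞)) ∧
  ENNReal.ofReal ((1 - δ) * M) ≤ ∑' i, μ (U i)

/-- given a multicover `{U i}` with `M` layers and error `δ` of a probability
space, for every measurable `V` there is an index `i` with
`μ (U i ∩ V) ≤ μ (U i) * μ V / (1 - δ)`. -/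
theorem exists_index_inter_le {X : Type*} [MeasurableSpace X] (μ : Measure X)
    [IsProbabilityMeasure μ] {I : Type*} (U : I → Set X) (M : ℕ) (hM : 0 < M)
    (δ : ℝ) (hδ0 : 0 ≤ δ) (hδ1 : δ < 1) (hU : IsMulticover μ U M δ)
    (V : Set X) (hV : MeasurableSet V) :
    ∃ i : I, μ (U i ∩ V) ≤ μ (U i) * μ V / ENNReal.ofReal (1 - δ) := by
  obtain ⟨hmeas, hlayers, hlower⟩ := hU
  set c := ENNReal.ofReal (1 - δ) with hc
  have hc0 : (0:ℝ≥0∞) < c := ENNReal.ofReal_pos.2 (by linarith)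
  have hcne : c ≠ 0 := hc0.ne'
  have hctop : c ≠ ∞ := ENNReal.ofReal_ne_top
  -- I is nonempty
  have hIne : Nonempty I := by
    by_contra h
    rw [not_nonempty_iff] at h
    rw [tsum_empty] at hlower
    have hpos : (0:ℝ) < (1 - δ) * M := by
      have : (0:ℝ) < M := by exact_mod_cast hM
      nlinarith
    exact absurd hlower (by simpa using (ENNReal.ofReal_pos.2 hpos))
  by_contra hcon
  push_neg at hcon
  -- sum of μ (U i ∩ V) is at most M * μ V
  have key : ∑' i, μ (U i ∩ V) ≤ (M : ℝ≥0∞) * μ V := by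
    have h1 : ∀ i, μ (U i ∩ V) = ∫⁻ x in V, (U i).indicator (fun _ => (1:ℝ≥0∞)) x ∂μ := by
      intro i
      calc μ (U i ∩ V) = (μ.restrict V) (U i) := (Measure.restrict_apply (hmeas i)).symm
        _ = ∫⁻ x, (U i).indicator (fun _ => (1:ℝ≥0∞)) x ∂(μ.restrict V) :=
            (lintegral_indicator_one (hmeas i)).symm
    rw [ENNReal.tsum_eq_iSup_sum]
    refine iSup_le fun s => ?_
    calc ∑ i ∈ s, μ (U i ∩ V)
        = ∫⁻ x in V, ∑ i ∈ s, (U i).indicator (fun _ => (1:ℝ≥0∞)) x ∂μ := by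
          simp_rw [h1]
          exact (lintegral_finset_sum _ (fun i _ => measurable_const.indicator (hmeas i))).symm
      _ ≤ ∫⁻ _ in V, (M : ℝ≥0∞) ∂μ := by
          refine lintegral_mono_ae (ae_restrict_of_ae ?_)
          filter_upwards [hlayers] with x hx
          exact (ENNReal.sum_le_tsum s).trans hx
      _ = (M : ℝ≥0∞) * μ V := by rw [setLIntegral_const]
  -- sum of the lower bounds is at least M * μ V
  have key2 : (M : ℝ≥0∞) * μ V ≤ ∑' i, μ (U i) * μ V / c := by
    have h2 : ∑' i, μ (U i) * μ V / c = (∑' i, μ (U i)) * (μ V / c) := by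
      simp_rw [mul_div_assoc]
      exact ENNReal.tsum_mul_right
    rw [h2]
    have h3 : c * (M : ℝ≥0∞) ≤ ∑' i, μ (U i) := by
      have := hlower
      rwa [ENNReal.ofReal_mul (by linarith), ENNReal.ofReal_natCast, ← hc] at this
    calc (M : ℝ≥0∞) * μ V = c * (M : ℝ≥0∞) * (μ V / c) := by
          rw [mul_comm c, mul_assoc, ENNReal.mul_div_cancel hcne hctop]
      _ ≤ (∑' i, μ (U i)) * (μ V / c) := by
          exact mul_le_mul_left h3 _
  -- strict inequality between the sums
  have hfin : ∑' i, μ (U i) * μ V / c ≠ ∞ := by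
    exact ne_top_of_le_ne_top (ENNReal.mul_ne_top (ENNReal.natCast_ne_top M) (measure_ne_top μ V))
      ((ENNReal.tsum_le_tsum (fun i => (hcon i).le)).trans key)
  obtain ⟨i0⟩ := hIne
  have hstrict : ∑' i, μ (U i) * μ V / c < ∑' i, μ (U i ∩ V) :=
    ENNReal.tsum_lt_tsum hfin (fun i => (hcon i).le) (hcon i0)
  exact absurd ((key2.trans_lt hstrict).trans_le key) (lt_irrefl _)
end

section
/- Let (X, 𝓕, μ) be a probability space, M a positive integer, 0 ≤ δ < 1, and let {U_n}_{n∈ℕ} be a multicover of X with M layers and error δ. Then for every integer k > 0 there exists a subset J ⊆ ℕ such that (a) μ(⋃_{j∈J} U_j) ≥ (1 − δ)(1 − 1/k), and (b) ∑_{j∈J} μ(U_j) ≤ k. -/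
open MeasureTheory
open scoped ENNReal

/-- Greedy selection: `selSet μ U k n` is the set of indices `< n` selected so far. -/
def selSet {X : Type*} [MeasurableSpace X] (μ : Measure X) (U : ℕ → Set X) (k : ℕ) :
    ℕ → Set ℕ
  | 0 => ∅
  | n + 1 => selSet μ U k n ∪
      {m | m = n ∧ μ (U n) ≤ k * μ (U n \ ⋃ j ∈ selSet μ U k n, U j)}

/-- The full set of selected indices. -/
def selJ {X : Type*} [MeasurableSpace X] (μ : Measure X) (U : ℕ → Set X) (k : ℕ) : Set ℕ :=
  {n | μ (U n) ≤ k * μ (U n \ ⋃ j ∈ selSet μ U k n, U j)}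

lemma selSet_eq {X : Type*} [MeasurableSpace X] (μ : Measure X) (U : ℕ → Set X) (k : ℕ)
    (n : ℕ) : selSet μ U k n = {j | j ∈ selJ μ U k ∧ j < n} := by
  induction n with
  | zero => ext m; simp [selSet]
  | succ n ih =>
      have hcond : (n ∈ selJ μ U k) ↔
          μ (U n) ≤ k * μ (U n \ ⋃ j ∈ {j | j ∈ selJ μ U k ∧ j < n}, U j) := by
        rw [← ih]; rfl
      ext m
      simp only [selSet, ih, Set.mem_union, Set.mem_setOf_eq]
      constructor
      · rintro (⟨hJ, hlt⟩ | ⟨rfl, hc⟩)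
        · exact ⟨hJ, by omega⟩
        · exact ⟨hcond.mpr hc, by omega⟩
      · rintro ⟨hJ, hlt⟩
        rcases Nat.lt_succ_iff_lt_or_eq.mp hlt with h | rfl
        · exact Or.inl ⟨hJ, h⟩
        · exact Or.inr ⟨rfl, hcond.mp hJ⟩

/-- from a countable multicover with error `δ` of a probability space one can
extract a subfamily covering at least `(1 - δ)(1 - 1/k)` of the space, the sum of whose
measures is at most `k`. -/
theorem exists_subfamily_cover {X : Type*} [MeasurableSpace X] (μ : Measure X)
    [IsProbabilityMeasure μ] (U : ℕ → Set X) (M : ℕ) (hM : 0 < M)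
    (δ : ℝ) (hδ0 : 0 ≤ δ) (hδ1 : δ < 1) (hU : IsMulticover μ U M δ)
    (k : ℕ) (hk : 0 < k) :
    ∃ J : Set ℕ,
      ENNReal.ofReal ((1 - δ) * (1 - 1 / (k : ℝ))) ≤ μ (⋃ j ∈ J, U j) ∧
      ∑' j : J, μ (U j) ≤ (k : ℝ≥0∞) := by
  obtain ⟨hmeas, hae, hsum⟩ := hU
  set J : Set ℕ := selJ μ U k with hJdef
  -- the partial unions and the "new part" of each selected set
  set Wn : ℕ → Set X := fun n => ⋃ j ∈ selSet μ U k n, U j with hWndef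
  set W : Set X := ⋃ j ∈ J, U j with hWdef
  set V : ℕ → Set X := fun n => U n \ Wn n with hVdef
  have hWnmeas : ∀ n, MeasurableSet (Wn n) := fun n =>
    MeasurableSet.biUnion (Set.to_countable _) fun j _ => hmeas j
  have hWmeas : MeasurableSet W :=
    MeasurableSet.biUnion (Set.to_countable _) fun j _ => hmeas j
  have hWnW : ∀ n, Wn n ⊆ W := by
    intro n
    apply Set.biUnion_subset_biUnion_left
    rw [selSet_eq]
    exact fun j hj => hj.1
  have hUW : ∀ n ∈ J, U n ⊆ W := fun n hn => Set.subset_biUnion_of_mem hn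
  have hsel : ∀ n ∈ J, μ (U n) ≤ k * μ (V n) := fun n hn => hn
  -- the new parts are pairwise disjoint
  have hdisj : ∀ i ∈ J, ∀ j ∈ J, i ≠ j → Disjoint (V i) (V j) := by
    have key : ∀ i ∈ J, ∀ j, i < j → Disjoint (V i) (V j) := by
      intro i hi j hij
      have hiWn : U i ⊆ Wn j := by
        apply Set.subset_biUnion_of_mem (u := U)
        rw [selSet_eq]
        exact ⟨hi, hij⟩
      refine Set.disjoint_left.mpr fun x hx hx' => ?_
      exact hx'.2 (hiWn hx.1)
    intro i hi j hj hne
    rcases Nat.lt_or_ge i j with h | h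
    · exact key i hi j h
    · exact (key j hj i (by omega)).symm
  -- Claim (b)
  have claimb : ∑' j : J, μ (U j) ≤ (k : ℝ≥0∞) := by
    calc ∑' j : J, μ (U j) ≤ ∑' j : J, (k : ℝ≥0∞) * μ (V j) :=
          ENNReal.tsum_le_tsum fun j => hsel j j.2
      _ = (k : ℝ≥0∞) * ∑' j : J, μ (V j) := ENNReal.tsum_mul_left
      _ = (k : ℝ≥0∞) * μ (⋃ j : J, V j) := by
          congr 1
          refine (measure_iUnion ?_ fun j : J => (hmeas j).diff (hWnmeas (j : ℕ))).symm
          intro i j hne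
          exact hdisj i i.2 j j.2 (Subtype.coe_injective.ne hne)
      _ ≤ (k : ℝ≥0∞) * 1 := by
          gcongr
          exact prob_le_one
      _ = (k : ℝ≥0∞) := mul_one _
  refine ⟨J, ?_, claimb⟩
  -- Claim (a)
  set K : ℕ := k - 1 with hKdef
  have hKk : K + 1 = k := Nat.succ_pred_eq_of_pos hk
  -- pointwise: K * μ (U n) ≤ (K+1) * μ (U n ∩ W)
  have key : ∀ n, (K : ℝ≥0∞) * μ (U n) ≤ (K + 1 : ℕ) * μ (U n ∩ W) := by
    intro n
    have hab : μ (U n ∩ W) + μ (U n \ W) = μ (U n) := measure_inter_add_diff _ hWmeas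
    have hKb : (K : ℝ≥0∞) * μ (U n \ W) ≤ μ (U n ∩ W) := by
      by_cases hn : n ∈ J
      · have : μ (U n \ W) = 0 := by
          rw [Set.diff_eq_empty.mpr (hUW n hn)]; exact measure_empty
        simp [this]
      · have h1 : (k : ℝ≥0∞) * μ (U n \ Wn n) < μ (U n) := lt_of_not_ge hn
        have h2 : μ (U n \ W) ≤ μ (U n \ Wn n) :=
          measure_mono (Set.diff_subset_diff_right (hWnW n))
        have h3 : ((K : ℝ≥0∞) + 1) * μ (U n \ W) ≤ μ (U n ∩ W) + μ (U n \ W) := by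
          rw [hab]
          calc ((K : ℝ≥0∞) + 1) * μ (U n \ W) = (k : ℝ≥0∞) * μ (U n \ W) := by
                rw [← hKk]; push_cast; ring
            _ ≤ (k : ℝ≥0∞) * μ (U n \ Wn n) := by gcongr
            _ ≤ μ (U n) := h1.le
        have hne : μ (U n \ W) ≠ ∞ := (measure_lt_top μ _).ne
        rw [add_mul, one_mul] at h3
        exact (ENNReal.add_le_add_iff_right hne).mp h3
    calc (K : ℝ≥0∞) * μ (U n) = (K : ℝ≥0∞) * μ (U n ∩ W) + (K : ℝ≥0∞) * μ (U n \ W) := by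
          rw [← mul_add, hab]
      _ ≤ (K : ℝ≥0∞) * μ (U n ∩ W) + μ (U n ∩ W) := by gcongr
      _ = ((K : ℕ) + 1 : ℕ) * μ (U n ∩ W) := by push_cast; ring
  -- summing up: K * ∑ μ(U n) ≤ (K+1) * ∑ μ (U n ∩ W)
  have hsum2 : (K : ℝ≥0∞) * ∑' n, μ (U n) ≤ (K + 1 : ℕ) * ∑' n, μ (U n ∩ W) := by
    rw [← ENNReal.tsum_mul_left, ← ENNReal.tsum_mul_left]
    exact ENNReal.tsum_le_tsum key
  -- ∑ μ (U n ∩ W) ≤ M * μ W via the multiplicity bound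
  have hT : ∑' n, μ (U n ∩ W) ≤ (M : ℝ≥0∞) * μ W := by
    have h1 : ∀ n, μ (U n ∩ W) = ∫⁻ x, (U n).indicator (fun _ => (1 : ℝ≥0∞)) x ∂(μ.restrict W) := by
      intro n
      have h := lintegral_indicator_one (μ := μ.restrict W) (hmeas n)
      rw [Measure.restrict_apply (hmeas n)] at h
      exact h.symm
    calc ∑' n, μ (U n ∩ W)
        = ∑' n, ∫⁻ x, (U n).indicator (fun _ => (1 : ℝ≥0∞)) x ∂(μ.restrict W) := tsum_congr h1
      _ = ∫⁻ x, ∑' n, (U n).indicator (fun _ => (1 : ℝ≥0∞)) x ∂(μ.restrict W) :=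
          (lintegral_tsum fun n => ((measurable_const.indicator (hmeas n)).aemeasurable)).symm
      _ ≤ ∫⁻ _, (M : ℝ≥0∞) ∂(μ.restrict W) := by
          apply lintegral_mono_ae
          exact ae_restrict_of_ae hae
      _ = (M : ℝ≥0∞) * μ W := by
          rw [lintegral_const, Measure.restrict_apply_univ, mul_comm]
  -- put everything together
  have hfinal : (K : ℝ≥0∞) * ENNReal.ofReal ((1 - δ) * M) ≤ ((K + 1 : ℕ) * M : ℝ≥0∞) * μ W := by
    calc (K : ℝ≥0∞) * ENNReal.ofReal ((1 - δ) * M) ≤ (K : ℝ≥0∞) * ∑' n, μ (U n) := by gcongr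
      _ ≤ (K + 1 : ℕ) * ∑' n, μ (U n ∩ W) := hsum2
      _ ≤ (K + 1 : ℕ) * ((M : ℝ≥0∞) * μ W) := by gcongr
      _ = ((K + 1 : ℕ) * M : ℝ≥0∞) * μ W := by ring
  have heq : ENNReal.ofReal ((1 - δ) * (1 - 1 / (k : ℝ))) * ((K + 1 : ℕ) * M : ℝ≥0∞)
      = (K : ℝ≥0∞) * ENNReal.ofReal ((1 - δ) * M) := by
    have hk0 : (k : ℝ) ≠ 0 := Nat.cast_ne_zero.mpr hk.ne'
    have h1δ : (0 : ℝ) ≤ 1 - δ := by linarith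
    have h1k : (0 : ℝ) ≤ 1 - 1 / (k : ℝ) := by
      rw [sub_nonneg]
      rw [div_le_one (by positivity)]
      exact_mod_cast hk
    have hKM : ((K + 1 : ℕ) * M : ℝ≥0∞) = ENNReal.ofReal (((K + 1) * M : ℕ) : ℝ) := by
      rw [ENNReal.ofReal_natCast]; push_cast; ring
    have hKr : (K : ℝ≥0∞) = ENNReal.ofReal (K : ℝ) := (ENNReal.ofReal_natCast K).symm
    rw [hKM, hKr, ← ENNReal.ofReal_mul (by positivity), ← ENNReal.ofReal_mul (by positivity)]
    congr 1
    have hKr2 : (K : ℝ) = (k : ℝ) - 1 := by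
      have : ((K : ℝ) + 1) = (k : ℝ) := by exact_mod_cast hKk
      linarith
    push_cast
    rw [hKr2]
    field_simp
    ring
  rw [← heq] at hfinal
  have hKM0 : (((K + 1 : ℕ) : ℝ≥0∞) * M : ℝ≥0∞) ≠ 0 :=
    mul_ne_zero (Nat.cast_ne_zero.mpr (Nat.succ_ne_zero K)) (Nat.cast_ne_zero.mpr hM.ne')
  have hKMtop : (((K + 1 : ℕ) : ℝ≥0∞) * M : ℝ≥0∞) ≠ ∞ := by finiteness
  rw [mul_comm] at hfinal
  rw [mul_comm ((K + 1 : ℕ) : ℝ≥0∞) ((M : ℝ≥0∞)) ] at hfinal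
  rw [mul_comm ((M : ℝ≥0∞)) ((K + 1 : ℕ) : ℝ≥0∞)] at hfinal
  exact (ENNReal.mul_le_mul_iff_right hKM0 hKMtop).mp hfinal
end

section
/- Let (X, 𝓕, μ) be a probability space, M a positive integer, 0 ≤ δ < 1, and let {U_n}_{n∈ℕ} be a multicover of X with M layers and error δ. Then for every integer k > 0 there exists a finite subset J ⊆ ℕ such that (a) μ(⋃_{j∈J} U_j) ≥ (1 − δ)(1 − 1/k), and (b) ∑_{j∈J} μ(U_j) ≤ 2k. -/
open MeasureTheory
open scoped ENNReal

/-- from a countable multicover with error `δ` of a probability space one can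
extract a *finite* subfamily covering at least `(1 - δ)(1 - 1/k)` of the space, the sum of
whose measures is at most `2k`. -/
theorem exists_finite_subfamily_cover {X : Type*} [MeasurableSpace X] (μ : Measure X)
    [IsProbabilityMeasure μ] (U : ℕ → Set X) (M : ℕ) (hM : 0 < M)
    (δ : ℝ) (hδ0 : 0 ≤ δ) (hδ1 : δ < 1) (hU : IsMulticover μ U M δ)
    (k : ℕ) (hk : 0 < k) :
    ∃ J : Finset ℕ,
      ENNReal.ofReal ((1 - δ) * (1 - 1 / (k : ℝ))) ≤ μ (⋃ j ∈ J, U j) ∧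
      ∑ j ∈ J, μ (U j) ≤ (2 * k : ℝ≥0∞) := by
  classical
  obtain ⟨hmeas, hae, hsum⟩ := hU
  have hk1 : (1:ℝ) ≤ (k:ℝ) := by exact_mod_cast hk
  have hkpos : (0:ℝ) < (k:ℝ) := by linarith
  have hM1 : (1:ℝ) ≤ (M:ℝ) := by exact_mod_cast hM
  have hM0 : (0:ℝ) ≤ (M:ℝ) := by linarith
  have ha : (0:ℝ) < 1 - δ := by linarith
  have h1k : (0:ℝ) ≤ 1 - 1/(k:ℝ) := by
    have h : 1/(k:ℝ) ≤ 1 := by rw [div_le_one hkpos]; exact hk1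
    linarith
  set t : ℝ≥0∞ := ENNReal.ofReal ((1 - δ) * (1 - 1 / (k:ℝ))) with ht
  set γ : ℝ≥0∞ := ENNReal.ofReal ((1 - δ) / (2 * (k:ℝ))) with hγdef
  have hγpos : 0 < γ := by rw [hγdef]; exact ENNReal.ofReal_pos.2 (by positivity)
  have hγtop : γ ≠ ⊤ := by rw [hγdef]; exact ENNReal.ofReal_ne_top
  have hVm : ∀ J : Finset ℕ, MeasurableSet (⋃ j ∈ J, U j) :=
    fun J => MeasurableSet.biUnion J.countable_toSet (fun b _ => hmeas b)
  -- mass of the family inside a measurable set W is at most M * μ W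
  have hinter : ∀ W : Set X, MeasurableSet W → ∑' i, μ (U i ∩ W) ≤ (M:ℝ≥0∞) * μ W := by
    intro W hWm
    have h1 : ∀ i, μ (U i ∩ W) = ∫⁻ x, (U i).indicator (fun _ => (1:ℝ≥0∞)) x ∂(μ.restrict W) := by
      intro i
      rw [lintegral_indicator (hmeas i), setLIntegral_one, Measure.restrict_apply (hmeas i)]
    calc ∑' i, μ (U i ∩ W)
        = ∫⁻ x, ∑' i, (U i).indicator (fun _ => (1:ℝ≥0∞)) x ∂(μ.restrict W) := by
          rw [lintegral_tsum (fun i => (measurable_const.indicator (hmeas i)).aemeasurable)]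
          exact tsum_congr h1
      _ ≤ ∫⁻ _, (M:ℝ≥0∞) ∂(μ.restrict W) := lintegral_mono_ae (ae_restrict_of_ae hae)
      _ = (M:ℝ≥0∞) * μ W := by rw [lintegral_const, Measure.restrict_apply_univ]
  have hS : ∑' i, μ (U i) ≤ (M:ℝ≥0∞) := by
    have h := hinter Set.univ MeasurableSet.univ
    simpa using h
  -- key step: while the covered part is below the target, there is a set with an
  -- efficient new contribution
  have key : ∀ W : Set X, MeasurableSet W → μ W ≤ t →
      ∃ j, γ * μ (U j) ≤ μ (U j \ W) ∧ 0 < μ (U j \ W) := by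
    intro W hWm hWt
    by_contra hcon
    push_neg at hcon
    have hle : ∀ j, μ (U j \ W) ≤ γ * μ (U j) := by
      intro j
      rcases lt_or_ge (μ (U j \ W)) (γ * μ (U j)) with h | h
      · exact h.le
      · exact le_trans (hcon j h) zero_le
    have hsplit : ∑' i, μ (U i) ≤ (M:ℝ≥0∞) * μ W + γ * ∑' i, μ (U i) := by
      calc ∑' i, μ (U i) = ∑' i, (μ (U i ∩ W) + μ (U i \ W)) :=
            tsum_congr fun i => (measure_inter_add_diff (U i) hWm).symm
        _ = ∑' i, μ (U i ∩ W) + ∑' i, μ (U i \ W) := ENNReal.tsum_add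
        _ ≤ (M:ℝ≥0∞) * μ W + γ * ∑' i, μ (U i) := by
            refine add_le_add (hinter W hWm) ?_
            calc ∑' i, μ (U i \ W) ≤ ∑' i, γ * μ (U i) := ENNReal.tsum_le_tsum hle
              _ = γ * ∑' i, μ (U i) := ENNReal.tsum_mul_left
    have hnn : (0:ℝ) ≤ (M:ℝ)*((1-δ)*(1-1/(k:ℝ))) := mul_nonneg hM0 (mul_nonneg ha.le h1k)
    have hnn2 : (0:ℝ) ≤ (1-δ)/(2*(k:ℝ))*(M:ℝ) :=
      mul_nonneg (div_nonneg ha.le (by positivity)) hM0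
    have hchain : ENNReal.ofReal ((1-δ)*(M:ℝ)) ≤
        ENNReal.ofReal ((M:ℝ)*((1-δ)*(1-1/(k:ℝ))) + (1-δ)/(2*(k:ℝ))*(M:ℝ)) := by
      refine le_trans hsum (le_trans hsplit ?_)
      rw [ENNReal.ofReal_add hnn hnn2]
      refine add_le_add ?_ ?_
      · calc (M:ℝ≥0∞) * μ W ≤ (M:ℝ≥0∞) * t := mul_le_mul_right hWt _
          _ = ENNReal.ofReal ((M:ℝ)*((1-δ)*(1-1/(k:ℝ)))) := by
              rw [ht, ← ENNReal.ofReal_natCast M, ← ENNReal.ofReal_mul hM0]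
      · calc γ * ∑' i, μ (U i) ≤ γ * (M:ℝ≥0∞) := mul_le_mul_right hS _
          _ = ENNReal.ofReal ((1-δ)/(2*(k:ℝ))*(M:ℝ)) := by
              rw [hγdef, ← ENNReal.ofReal_natCast M,
                ← ENNReal.ofReal_mul (div_nonneg ha.le (by positivity))]
    rw [ENNReal.ofReal_le_ofReal_iff (by linarith)] at hchain
    have h2 : (M:ℝ)*((1-δ)*(1-1/(k:ℝ))) + (1-δ)/(2*(k:ℝ))*(M:ℝ)
        = (1-δ)*(M:ℝ) - (1-δ)*(M:ℝ)/(k:ℝ) + (1-δ)*(M:ℝ)/(2*(k:ℝ)) := by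
      field_simp
    have h3 : (1-δ)*(M:ℝ)/(2*(k:ℝ)) < (1-δ)*(M:ℝ)/(k:ℝ) :=
      div_lt_div_of_pos_left (by positivity) hkpos (by linarith)
    linarith
  -- refined choice: also take the new contribution at least half of the best possible one
  have choose_lemma : ∀ W : Set X, MeasurableSet W → μ W ≤ t →
      ∃ j, γ * μ (U j) ≤ μ (U j \ W) ∧ 0 < μ (U j \ W) ∧
        ∀ j', γ * μ (U j') ≤ μ (U j' \ W) → μ (U j' \ W) ≤ 2 * μ (U j \ W) := by
    intro W hWm hWt
    obtain ⟨j₀, hj₀, hj₀pos⟩ := key W hWm hWt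
    set s : ℝ≥0∞ := ⨆ j, if γ * μ (U j) ≤ μ (U j \ W) then μ (U j \ W) else 0 with hs
    have hs1 : s ≤ 1 := by
      rw [hs]
      refine iSup_le fun j => ?_
      split
      · exact prob_le_one
      · exact zero_le_one
    have hspos : 0 < s := by
      refine lt_of_lt_of_le hj₀pos ?_
      rw [hs]
      refine le_iSup_of_le j₀ ?_
      rw [if_pos hj₀]
    have hstop' : s ≠ ⊤ := (lt_of_le_of_lt hs1 ENNReal.one_lt_top).ne
    have hhalf : s / 2 < s := ENNReal.half_lt_self hspos.ne' hstop'
    have hhalf2 : s / 2 < ⨆ j, if γ * μ (U j) ≤ μ (U j \ W) then μ (U j \ W) else 0 := by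
      rw [← hs]; exact hhalf
    obtain ⟨j, hj⟩ := lt_iSup_iff.mp hhalf2
    by_cases hcond : γ * μ (U j) ≤ μ (U j \ W)
    · rw [if_pos hcond] at hj
      refine ⟨j, hcond, lt_of_le_of_lt zero_le hj, fun j' hj' => ?_⟩
      have h1 : μ (U j' \ W) ≤ s := by
        rw [hs]; exact le_iSup_of_le j' (by rw [if_pos hj'])
      have h2 : s < 2 * μ (U j \ W) := by
        have h := (ENNReal.div_lt_iff (Or.inl (two_ne_zero)) (Or.inl (ENNReal.ofNat_ne_top))).mp hj
        rwa [mul_comm] at h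
      exact h1.trans h2.le
    · rw [if_neg hcond] at hj
      exact absurd hj (by simp)
  -- the greedy step function
  have hF : ∀ J : Finset ℕ, ∃ J' : Finset ℕ,
      (t ≤ μ (⋃ j ∈ J, U j) → J' = J) ∧
      (μ (⋃ j ∈ J, U j) < t → ∃ j, j ∉ J ∧ J' = insert j J ∧
        γ * μ (U j) ≤ μ (U j \ ⋃ i ∈ J, U i) ∧ 0 < μ (U j \ ⋃ i ∈ J, U i) ∧
        ∀ j', γ * μ (U j') ≤ μ (U j' \ ⋃ i ∈ J, U i) →
          μ (U j' \ ⋃ i ∈ J, U i) ≤ 2 * μ (U j \ ⋃ i ∈ J, U i)) := by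
    intro J
    by_cases h : t ≤ μ (⋃ j ∈ J, U j)
    · exact ⟨J, fun _ => rfl, fun h' => absurd h h'.not_ge⟩
    · have h' := not_le.mp h
      obtain ⟨j, h1, h2, h3⟩ := choose_lemma _ (hVm J) h'.le
      have hjJ : j ∉ J := by
        intro hmem
        have hsub : U j ⊆ ⋃ i ∈ J, U i := Set.subset_iUnion₂ (s := fun i (_ : i ∈ J) => U i) j hmem
        rw [Set.diff_eq_empty.mpr hsub] at h2
        simp at h2
      exact ⟨insert j J, fun hc => absurd hc h, fun _ => ⟨j, hjJ, rfl, h1, h2, h3⟩⟩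
  choose F hFeq hFlt using hF
  set P : ℕ → Finset ℕ := fun n => F^[n] ∅ with hP
  have hP0 : P 0 = ∅ := rfl
  have hPsucc : ∀ n, P (n+1) = F (P n) := by
    intro n
    simp only [hP, Function.iterate_succ_apply']
  -- termination of the greedy procedure
  have hstop : ∃ n, t ≤ μ (⋃ j ∈ P n, U j) := by
    by_contra hcon
    push_neg at hcon
    choose jseq hnotin hins hγj hjpos hjsup using fun n => hFlt (P n) (hcon n)
    have hPs : ∀ n, P (n+1) = insert (jseq n) (P n) := fun n => (hPsucc n).trans (hins n)
    have hmonoF : Monotone fun n => (⋃ j ∈ P n, U j : Set X) := by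
      apply monotone_nat_of_le_succ
      intro n
      rw [hPs n, Finset.set_biUnion_insert]
      exact Set.subset_union_right
    have hGm : MeasurableSet (⋃ n, ⋃ j ∈ P n, U j) := MeasurableSet.iUnion fun n => hVm _
    have hμG : μ (⋃ n, ⋃ j ∈ P n, U j) ≤ t := by
      rw [Directed.measure_iUnion (fun m n => ⟨max m n, hmonoF (le_max_left m n),
        hmonoF (le_max_right m n)⟩)]
      exact iSup_le fun n => (hcon n).le
    obtain ⟨j0, hj01, hj02⟩ := key _ hGm hμG
    have hgle : ∀ n, μ (U j0 \ ⋃ m, ⋃ j ∈ P m, U j)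
        ≤ 2 * μ (U (jseq n) \ ⋃ j ∈ P n, U j) := by
      intro n
      have hsub : (U j0 \ ⋃ m, ⋃ j ∈ P m, U j) ⊆ U j0 \ ⋃ j ∈ P n, U j :=
        Set.diff_subset_diff_right (Set.subset_iUnion (fun m => ⋃ j ∈ P m, U j) n)
      have hcand : γ * μ (U j0) ≤ μ (U j0 \ ⋃ j ∈ P n, U j) :=
        le_trans hj01 (measure_mono hsub)
      exact le_trans (measure_mono hsub) (hjsup n j0 hcand)
    have hgrow : ∀ n : ℕ, (n : ℝ≥0∞) * μ (U j0 \ ⋃ m, ⋃ j ∈ P m, U j)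
        ≤ 2 * μ (⋃ j ∈ P n, U j) := by
      intro n
      induction n with
      | zero => simp
      | succ m ih =>
        have hmeq : μ (⋃ j ∈ P (m+1), U j)
            = μ (⋃ j ∈ P m, U j) + μ (U (jseq m) \ ⋃ j ∈ P m, U j) := by
          rw [hPs m, Finset.set_biUnion_insert, Set.union_comm]
          exact (measure_add_diff (hVm (P m)).nullMeasurableSet (U (jseq m))).symm
        rw [hmeq, Nat.cast_succ, add_mul, one_mul, mul_add]
        exact add_le_add ih (hgle m)
    have hgtop : μ (U j0 \ ⋃ m, ⋃ j ∈ P m, U j) ≠ ⊤ :=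
      (lt_of_le_of_lt prob_le_one ENNReal.one_lt_top).ne
    obtain ⟨n, hn⟩ := ENNReal.exists_nat_gt
      (ENNReal.div_lt_top (ENNReal.ofNat_ne_top (n := 2)) hj02.ne').ne
    have h2lt : (2:ℝ≥0∞) < n * μ (U j0 \ ⋃ m, ⋃ j ∈ P m, U j) :=
      (ENNReal.div_lt_iff (Or.inl hj02.ne') (Or.inl hgtop)).mp hn
    have h2ge : (n:ℝ≥0∞) * μ (U j0 \ ⋃ m, ⋃ j ∈ P m, U j) ≤ 2 := by
      refine le_trans (hgrow n) ?_
      calc 2 * μ (⋃ j ∈ P n, U j) ≤ 2 * 1 := mul_le_mul_right prob_le_one 2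
        _ = 2 := mul_one 2
    exact absurd h2ge h2lt.not_ge
  have hNspec := Nat.find_spec hstop
  have hNmin : ∀ m, m < Nat.find hstop → μ (⋃ j ∈ P m, U j) < t :=
    fun m hm => not_le.mp (Nat.find_min hstop hm)
  set N := Nat.find hstop with hNdef
  -- cost estimate along the construction
  have hcost : ∀ n, n ≤ N → γ * ∑ j ∈ P n, μ (U j) ≤ μ (⋃ j ∈ P n, U j) := by
    intro n
    induction n with
    | zero => intro _; simp [hP0]
    | succ m ih =>
      intro hmN
      have hmlt : μ (⋃ j ∈ P m, U j) < t := hNmin m (lt_of_lt_of_le (Nat.lt_succ_self m) hmN)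
      obtain ⟨j, hjnot, hins, hγj, hjpos, _⟩ := hFlt (P m) hmlt
      have hPm1 : P (m+1) = insert j (P m) := (hPsucc m).trans hins
      rw [hPm1, Finset.sum_insert hjnot, mul_add, Finset.set_biUnion_insert, Set.union_comm,
        ← measure_add_diff (hVm (P m)).nullMeasurableSet (U j),
        add_comm (μ (⋃ i ∈ P m, U i))]
      exact add_le_add hγj (ih (le_trans (Nat.le_succ m) hmN))
  refine ⟨P N, hNspec, ?_⟩
  rcases Nat.eq_zero_or_pos N with hN0 | hNpos
  · simp [hN0, hP0]
  · obtain ⟨m, hm⟩ : ∃ m, N = m + 1 := ⟨N - 1, (Nat.succ_pred_eq_of_pos hNpos).symm⟩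
    have hmlt : μ (⋃ j ∈ P m, U j) < t := hNmin m (by omega)
    obtain ⟨j, hjnot, hins, hγj, hjpos, _⟩ := hFlt (P m) hmlt
    have hPm1 : P N = insert j (P m) := by rw [hm]; exact (hPsucc m).trans hins
    have hc1 : ∑ i ∈ P m, μ (U i) ≤ ENNReal.ofReal (2*(k:ℝ) - 2) := by
      have htγ : t ≤ γ * ENNReal.ofReal (2*(k:ℝ) - 2) := by
        rw [ht, hγdef, ← ENNReal.ofReal_mul (div_nonneg ha.le (by positivity))]
        refine ENNReal.ofReal_le_ofReal (le_of_eq ?_)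
        field_simp
      have hγc : γ * ∑ i ∈ P m, μ (U i) ≤ γ * ENNReal.ofReal (2*(k:ℝ) - 2) :=
        le_trans (hcost m (by omega)) (le_trans hmlt.le htγ)
      exact (ENNReal.mul_le_mul_iff_right hγpos.ne' hγtop).mp hγc
    rw [hPm1, Finset.sum_insert hjnot]
    calc μ (U j) + ∑ i ∈ P m, μ (U i) ≤ 1 + ENNReal.ofReal (2*(k:ℝ) - 2) :=
          add_le_add prob_le_one hc1
      _ = ENNReal.ofReal (1 + (2*(k:ℝ) - 2)) := by
          rw [ENNReal.ofReal_add (by norm_num) (by linarith), ENNReal.ofReal_one]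
      _ ≤ ENNReal.ofReal (2*(k:ℝ)) := ENNReal.ofReal_le_ofReal (by linarith)
      _ = (2 * k : ℝ≥0∞) := by
          rw [ENNReal.ofReal_mul (by norm_num : (0:ℝ) ≤ 2)]
          norm_num [ENNReal.ofReal_natCast]
end

section
/- Let (X, 𝓕, μ) be a measure space which is countably separated, i.e., there is a countable family 𝓒 ⊆ 𝓕 such that for any two distinct points x, y ∈ X there is C ∈ 𝓒 with x ∈ C and y ∉ C. If a countable group G acts measurably (each g ∈ G acting as a bi-measurable bijection of X) and pointwise freely on X, then the action is setwise free. -/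
open MeasureTheory
open scoped Pointwise

/-- An action of `G` on a measure space is *setwise free* if for every `g ≠ 1` and every
measurable set `A` of positive measure there is a positive-measure measurable `B ⊆ A` with
`μ (gB ∆ B) > 0`. -/
def SetwiseFree (G : Type*) {X : Type*} [Group G] [MulAction G X] [MeasurableSpace X]
    (μ : Measure X) : Prop :=
  ∀ g : G, g ≠ 1 → ∀ A : Set X, MeasurableSet A → 0 < μ A →
    ∃ B : Set X, B ⊆ A ∧ MeasurableSet B ∧ 0 < μ B ∧ 0 < μ (symmDiff (g • B) B)

/-- An action of `G` on a measure space is *pointwise free* if the set of points fixed by some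
non-identity element has measure zero. -/
def PointwiseFree (G : Type*) {X : Type*} [Group G] [MulAction G X] [MeasurableSpace X]
    (μ : Measure X) : Prop :=
  μ {x : X | ∃ g : G, g ≠ 1 ∧ g • x = x} = 0

/-- a pointwise free measurable action of a countable group on a countably
separated measure space is setwise free. -/
theorem setwiseFree_of_pointwiseFree {G X : Type*} [Group G] [Countable G] [MulAction G X]
    [MeasurableSpace X] (μ : Measure X)
    (hmeas : ∀ g : G, Measurable fun x : X => g • x)
    (hsep : ∃ C : ℕ → Set X, (∀ n, MeasurableSet (C n)) ∧
      ∀ x y : X, x ≠ y → ∃ n, x ∈ C n ∧ y ∉ C n)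
    (hfree : PointwiseFree G μ) :
    SetwiseFree G μ := by
  obtain ⟨C, hCmeas, hC⟩ := hsep
  intro g hg A hA hApos
  set F : Set X := {x : X | ∃ g : G, g ≠ 1 ∧ g • x = x} with hF
  set N := toMeasurable μ F with hN
  have hNmeas : MeasurableSet N := measurableSet_toMeasurable μ F
  have hNnull : μ N = 0 := by
    rw [hN, measure_toMeasurable]; exact hfree
  set D : ℕ → Set X := fun n => ((A \ N) ∩ ((fun x => g • x) ⁻¹' C n)) ∩ (C n)ᶜ with hD
  have hDmeas : ∀ n, MeasurableSet (D n) := fun n =>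
    (((hA.diff hNmeas).inter ((hCmeas n).preimage (hmeas g))).inter (hCmeas n).compl)
  have hcover : A \ N ⊆ ⋃ n, D n := by
    intro x hx
    have hxF : x ∉ F := fun h => hx.2 (subset_toMeasurable μ F h)
    have hgx : g • x ≠ x := fun h => hxF ⟨g, hg, h⟩
    obtain ⟨n, h1, h2⟩ := hC (g • x) x hgx
    exact Set.mem_iUnion.2 ⟨n, ⟨⟨hx, h1⟩, h2⟩⟩
  have hANpos : 0 < μ (A \ N) := by
    rwa [measure_diff_null hNnull]
  have hex : ∃ n, 0 < μ (D n) := by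
    by_contra h
    push_neg at h
    have : μ (⋃ n, D n) = 0 :=
      measure_iUnion_null fun n => le_antisymm (h n) zero_le
    exact absurd (le_trans (measure_mono hcover) this.le) hANpos.not_ge
  obtain ⟨n, hn⟩ := hex
  refine ⟨D n, ?_, hDmeas n, hn, ?_⟩
  · exact fun x hx => hx.1.1.1
  · have hdisj : D n ∩ (g • D n) = ∅ := by
      ext x
      simp only [Set.mem_inter_iff, Set.mem_empty_iff_false, iff_false, not_and]
      rintro hx ⟨y, hy, rfl⟩
      exact hx.2 hy.1.2
    have hsub : D n ⊆ symmDiff (g • D n) (D n) := by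
      intro x hx
      rw [Set.mem_symmDiff]
      refine Or.inr ⟨hx, fun h => ?_⟩
      have : x ∈ D n ∩ (g • D n) := ⟨hx, h⟩
      rw [hdisj] at this
      exact this
    exact lt_of_lt_of_le hn (measure_mono hsub)
end

section
/- Let a group G act non-singularly and setwise freely on a measure space (X, 𝓕, μ). Then for every finite subset H ⊆ G and every A ∈ 𝓕 with μ(A) > 0, there exists a measurable set B ⊆ A with μ(B) > 0 which is an H-set, i.e., μ(hB ∩ h'B) = 0 for all distinct h, h' ∈ H. -/
open MeasureTheory
open scoped Pointwise

/-- A measurable action is *non-singular* if each group element acts measurably and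
preserves nullity of measurable sets. -/
def NonSingularAction (G : Type*) {X : Type*} [Group G] [MulAction G X] [MeasurableSpace X]
    (μ : Measure X) : Prop :=
  (∀ g : G, Measurable fun x : X => g • x) ∧
  ∀ (g : G) (A : Set X), MeasurableSet A → (μ A = 0 ↔ μ (g⁻¹ • A) = 0)

/-- A set `B` is an *`H`-set* if its images under distinct elements of `H` are almost
disjoint. -/
def IsHSet {G X : Type*} [Group G] [MulAction G X] [MeasurableSpace X]
    (μ : Measure X) (H : Set G) (B : Set X) : Prop :=
  ∀ h ∈ H, ∀ h' ∈ H, h ≠ h' → μ ((h • B) ∩ (h' • B)) = 0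

/-- for a non-singular setwise free action, any measurable set of positive
measure contains a positive-measure `H`-set, for every finite `H ⊆ G`. -/
theorem exists_HSet_subset {G X : Type*} [Group G] [MulAction G X] [MeasurableSpace X]
    (μ : Measure X) (hns : NonSingularAction G μ) (hfree : SetwiseFree G μ)
    (H : Finset G) (A : Set X) (hA : MeasurableSet A) (hApos : 0 < μ A) :
    ∃ B : Set X, B ⊆ A ∧ MeasurableSet B ∧ 0 < μ B ∧ IsHSet μ (H : Set G) B := by
  classical
  have msmul : ∀ (g : G) (s : Set X), MeasurableSet s → MeasurableSet (g • s) := by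
    intro g s hs
    have := (hns.1 g⁻¹) hs
    rwa [Set.preimage_smul, inv_inv] at this
  -- single step: for g ≠ 1, any positive measure set contains a positive measure subset
  -- disjoint from its g-translate
  have step : ∀ (g : G), g ≠ 1 → ∀ A : Set X, MeasurableSet A → 0 < μ A →
      ∃ C : Set X, C ⊆ A ∧ MeasurableSet C ∧ 0 < μ C ∧ Disjoint (g • C) C := by
    intro g hg A hA hApos
    obtain ⟨B, hBA, hB, hBpos, hsd⟩ := hfree g hg A hA hApos
    rw [Set.symmDiff_def] at hsd
    have hcase : 0 < μ ((g • B) \ B) ∨ 0 < μ (B \ g • B) := by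
      by_contra h
      push_neg at h
      have h1 : μ ((g • B) \ B) = 0 := le_antisymm h.1 zero_le
      have h2 : μ (B \ g • B) = 0 := le_antisymm h.2 zero_le
      have := measure_union_le (μ := μ) ((g • B) \ B) (B \ g • B)
      rw [h1, h2, add_zero] at this
      exact absurd (le_antisymm this zero_le) hsd.ne'
    rcases hcase with h | h
    · -- take C = B \ g⁻¹ • B, so g • C = g • B \ B
      refine ⟨B \ g⁻¹ • B, fun x hx => hBA hx.1, hB.diff (msmul g⁻¹ B hB), ?_, ?_⟩
      · have hiff := hns.2 g ((g • B) \ B) ((msmul g B hB).diff hB)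
        have heq : g⁻¹ • ((g • B) \ B) = B \ g⁻¹ • B := by
          rw [Set.smul_set_sdiff, inv_smul_smul]
        rw [heq] at hiff
        rcases eq_or_ne (μ (B \ g⁻¹ • B)) 0 with h0 | h0
        · exact absurd (hiff.mpr h0) h.ne'
        · exact pos_iff_ne_zero.mpr h0
      · have heq : g • (B \ g⁻¹ • B) = (g • B) \ B := by
          rw [Set.smul_set_sdiff, smul_inv_smul]
        rw [heq]
        exact Set.disjoint_sdiff_left.mono_right fun x hx => hx.1
    · -- take C = B \ g • B
      refine ⟨B \ g • B, fun x hx => hBA hx.1, hB.diff (msmul g B hB), h, ?_⟩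
      have hsub : g • (B \ g • B) ⊆ g • B := Set.smul_set_mono fun x hx => hx.1
      exact (Set.disjoint_sdiff_left (s := g • B) (t := B)).symm.mono_left hsub
  -- iterate over a finite set of group elements not containing 1
  have multi : ∀ S : Finset G, (1 : G) ∉ S → ∀ A : Set X, MeasurableSet A → 0 < μ A →
      ∃ B : Set X, B ⊆ A ∧ MeasurableSet B ∧ 0 < μ B ∧ ∀ g ∈ S, Disjoint (g • B) B := by
    intro S
    induction S using Finset.induction_on with
    | empty => intro _ A hA hApos; exact ⟨A, subset_rfl, hA, hApos, by simp⟩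
    | @insert a S ha ih =>
      intro h1 A hA hApos
      have ha1 : a ≠ 1 := fun h => h1 (h ▸ Finset.mem_insert_self a S)
      have h1S : (1 : G) ∉ S := fun h => h1 (Finset.mem_insert_of_mem h)
      obtain ⟨B, hBA, hB, hBpos, hBdisj⟩ := ih h1S A hA hApos
      obtain ⟨C, hCB, hC, hCpos, hCdisj⟩ := step a ha1 B hB hBpos
      refine ⟨C, hCB.trans hBA, hC, hCpos, ?_⟩
      intro g hg
      rcases Finset.mem_insert.mp hg with rfl | hg
      · exact hCdisj
      · exact (hBdisj g hg).mono (Set.smul_set_mono hCB) hCB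
  set S : Finset G := ((H ×ˢ H).image fun p => p.1⁻¹ * p.2).erase 1 with hSdef
  obtain ⟨B, hBA, hB, hBpos, hdisj⟩ := multi S (Finset.notMem_erase 1 _) A hA hApos
  refine ⟨B, hBA, hB, hBpos, ?_⟩
  intro h hh h' hh' hne
  have hg : h⁻¹ * h' ∈ S := by
    refine Finset.mem_erase.mpr ⟨?_, Finset.mem_image.mpr ⟨(h, h'), Finset.mem_product.mpr
      ⟨hh, hh'⟩, rfl⟩⟩
    intro hcontra
    exact hne (inv_mul_eq_one.mp hcontra)
  have hdis := hdisj _ hg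
  have hmeas : MeasurableSet ((h • B) ∩ (h' • B)) := (msmul h B hB).inter (msmul h' B hB)
  have hiff := hns.2 h ((h • B) ∩ (h' • B)) hmeas
  have heq : h⁻¹ • ((h • B) ∩ (h' • B)) = B ∩ ((h⁻¹ * h') • B) := by
    rw [Set.smul_set_inter, inv_smul_smul, smul_smul]
  rw [heq] at hiff
  refine hiff.mpr ?_
  have : B ∩ ((h⁻¹ * h') • B) = ∅ := by
    rw [Set.inter_comm]
    exact Set.disjoint_iff_inter_eq_empty.mp hdis
  rw [this, measure_empty]
end

section
/- Let a group G act non-singularly and setwise freely on a probability space (X, 𝓕, μ), and let H ⊆ G be finite and nonempty. Then there exists a countable family (A_n)_{n∈ℕ} of H-sets which partitions X up to null sets, i.e., μ(A_n ∩ A_m) = 0 for n ≠ m and μ(X \ ⋃_n A_n) = 0. Moreover, the family {HA_n}_{n∈ℕ} (where HA_n = ⋃_{h∈H} hA_n) is a multicover of X with |H| layers and error 0. -/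
open MeasureTheory
open scoped Pointwise ENNReal

section Aux
variable {G X : Type*} [Group G] [MulAction G X] [MeasurableSpace X] {μ : Measure X}

lemma smul_measurableSet' (hns : NonSingularAction G μ) (g : G) {B : Set X}
    (hB : MeasurableSet B) : MeasurableSet (g • B) := by
  have h : g • B = (fun x : X => g⁻¹ • x) ⁻¹' B := by
    ext x; simp [Set.mem_smul_set_iff_inv_smul_mem]
  rw [h]; exact hns.1 g⁻¹ hB

lemma smul_null_iff' (hns : NonSingularAction G μ) (g : G) {B : Set X}
    (hB : MeasurableSet B) : μ (g • B) = 0 ↔ μ B = 0 := by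
  have h := hns.2 g⁻¹ B hB
  rw [inv_inv] at h
  exact h.symm

lemma exists_smul_disjoint' (hns : NonSingularAction G μ) (hfree : SetwiseFree G μ)
    (g : G) (hg : g ≠ 1) (A : Set X) (hA : MeasurableSet A) (hApos : 0 < μ A) :
    ∃ C, C ⊆ A ∧ MeasurableSet C ∧ 0 < μ C ∧ Disjoint (g • C) C := by
  obtain ⟨B, hBA, hBm, _hBpos, hBsd⟩ := hfree g hg A hA hApos
  have hgBm : MeasurableSet (g • B) := smul_measurableSet' hns g hBm
  have hcases : 0 < μ (B \ g • B) ∨ 0 < μ (g • B \ B) := by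
    by_contra hc
    push_neg at hc
    have h1 : μ (B \ g • B) = 0 := le_antisymm hc.1 zero_le
    have h2 : μ (g • B \ B) = 0 := le_antisymm hc.2 zero_le
    have : μ (symmDiff (g • B) B) = 0 := by
      rw [Set.symmDiff_def]
      exact measure_union_null h2 h1
    exact absurd this hBsd.ne'
  rcases hcases with hpos | hpos
  · refine ⟨B \ g • B, Set.diff_subset.trans hBA, hBm.diff hgBm, hpos, ?_⟩
    exact disjoint_sdiff_self_right.mono_left (Set.smul_set_mono Set.diff_subset)
  · refine ⟨B \ g⁻¹ • B, Set.diff_subset.trans hBA,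
      hBm.diff (smul_measurableSet' hns g⁻¹ hBm), ?_, ?_⟩
    · have hCm : MeasurableSet (B \ g⁻¹ • B) :=
        hBm.diff (smul_measurableSet' hns g⁻¹ hBm)
      have heq : g • (B \ g⁻¹ • B) = g • B \ B := by
        rw [Set.smul_set_sdiff, smul_inv_smul]
      rw [pos_iff_ne_zero]
      intro h0
      have : μ (g • (B \ g⁻¹ • B)) = 0 := (smul_null_iff' hns g hCm).mpr h0
      rw [heq] at this
      exact absurd this hpos.ne'
    · have heq : g • (B \ g⁻¹ • B) = g • B \ B := by
        rw [Set.smul_set_sdiff, smul_inv_smul]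
      rw [heq]
      exact disjoint_sdiff_self_left.mono_right Set.diff_subset

lemma exists_disjoint_finset' (hns : NonSingularAction G μ) (hfree : SetwiseFree G μ)
    (S : Finset G) : (∀ g ∈ S, g ≠ 1) → ∀ A : Set X, MeasurableSet A → 0 < μ A →
      ∃ B, B ⊆ A ∧ MeasurableSet B ∧ 0 < μ B ∧ ∀ g ∈ S, Disjoint (g • B) B := by
  classical
  induction S using Finset.induction_on with
  | empty =>
    intro _ A hA hp
    exact ⟨A, subset_rfl, hA, hp, by simp⟩
  | insert g S hgS ih =>
    intro hS A hA hp
    obtain ⟨B, hBA, hBm, hBpos, hBdisj⟩ :=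
      ih (fun g' hg' => hS g' (Finset.mem_insert_of_mem hg')) A hA hp
    obtain ⟨C, hCB, hCm, hCpos, hCd⟩ :=
      exists_smul_disjoint' hns hfree g (hS g (Finset.mem_insert_self g S)) B hBm hBpos
    refine ⟨C, hCB.trans hBA, hCm, hCpos, ?_⟩
    intro g' hg'
    rcases Finset.mem_insert.mp hg' with rfl | hg'
    · exact hCd
    · exact (hBdisj g' hg').mono (Set.smul_set_mono hCB) hCB

end Aux

/-- for a non-singular setwise free action on a probability space and a finite
nonempty `H ⊆ G`, there is a countable partition of `X` (up to null sets) into `H`-sets `A n`,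
and the towers `H • A n` form a multicover with `|H|` layers and error `0`. -/
theorem exists_partition_into_HSets {G X : Type*} [Group G] [MulAction G X]
    [MeasurableSpace X] (μ : Measure X) [IsProbabilityMeasure μ]
    (hns : NonSingularAction G μ) (hfree : SetwiseFree G μ)
    (H : Finset G) (hH : H.Nonempty) :
    ∃ A : ℕ → Set X,
      (∀ n, MeasurableSet (A n)) ∧
      (∀ n, IsHSet μ (H : Set G) (A n)) ∧
      (∀ n m, n ≠ m → μ (A n ∩ A m) = 0) ∧
      μ (Set.univ \ ⋃ n, A n) = 0 ∧
      IsMulticover μ (fun n => ⋃ h ∈ H, h • A n) H.card 0 := by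
  classical
  -- the finite set of "difference" elements
  set S : Finset G := ((H ×ˢ H).filter fun p => p.1 ≠ p.2).image fun p => p.1⁻¹ * p.2
    with hSdef
  have hS1 : ∀ g ∈ S, g ≠ 1 := by
    intro g hg
    simp only [hSdef, Finset.mem_image, Finset.mem_filter, Finset.mem_product] at hg
    obtain ⟨⟨a, b⟩, ⟨⟨_, _⟩, hab⟩, rfl⟩ := hg
    simpa [inv_mul_eq_one] using hab
  have hSmem : ∀ h ∈ H, ∀ h' ∈ H, h ≠ h' → h⁻¹ * h' ∈ S := by
    intro h hh h' hh' hne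
    simp only [hSdef, Finset.mem_image, Finset.mem_filter, Finset.mem_product]
    exact ⟨⟨h, h'⟩, ⟨⟨hh, hh'⟩, hne⟩, rfl⟩
  -- the greedy choice function
  have pick : ∀ T : Set X, ∃ B, B ⊆ T ∧ MeasurableSet B ∧
      (∀ g ∈ S, Disjoint (g • B) B) ∧
      ∀ C, C ⊆ T → MeasurableSet C → (∀ g ∈ S, Disjoint (g • C) C) → μ C ≤ 2 * μ B := by
    intro T
    set ι := {B : Set X // B ⊆ T ∧ MeasurableSet B ∧ ∀ g ∈ S, Disjoint (g • B) B}
    set m : ℝ≥0∞ := ⨆ B : ι, μ B.1 with hm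
    have hmle : m ≤ 1 := iSup_le fun B => prob_le_one
    by_cases hm0 : m = 0
    · refine ⟨∅, Set.empty_subset T, MeasurableSet.empty, by simp, ?_⟩
      intro C hCT hCm hCd
      have h1 : μ C ≤ m := le_iSup (fun B : ι => μ B.1) ⟨C, hCT, hCm, hCd⟩
      rw [hm0] at h1
      exact h1.trans zero_le
    · have hmtop : m ≠ ⊤ := ne_top_of_le_ne_top ENNReal.one_ne_top hmle
      have hhalf : m / 2 < m := ENNReal.half_lt_self hm0 hmtop
      obtain ⟨⟨B, hBT, hBm, hBd⟩, hB⟩ := lt_iSup_iff.mp hhalf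
      refine ⟨B, hBT, hBm, hBd, ?_⟩
      intro C hCT hCm hCd
      have h1 : μ C ≤ m := le_iSup (fun B : ι => μ B.1) ⟨C, hCT, hCm, hCd⟩
      calc μ C ≤ m := h1
        _ = m / 2 + m / 2 := (ENNReal.add_halves m).symm
        _ ≤ μ B + μ B := add_le_add hB.le hB.le
        _ = 2 * μ B := (two_mul _).symm
  choose F hFsub hFmeas hFdisj hFbnd using pick
  let W : ℕ → Set X := fun n => Nat.rec Set.univ (fun _ w => w \ F w) n
  set A : ℕ → Set X := fun n => F (W n) with hAdef
  have hWsucc : ∀ n, W (n + 1) = W n \ A n := fun n => rfl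
  have hAmeas : ∀ n, MeasurableSet (A n) := fun n => hFmeas (W n)
  have hAdisjS : ∀ n, ∀ g ∈ S, Disjoint (g • A n) (A n) := fun n => hFdisj (W n)
  have hAW : ∀ n, A n ⊆ W n := fun n => hFsub (W n)
  have hWanti : ∀ {n m : ℕ}, n ≤ m → W m ⊆ W n := by
    intro n m h
    induction h with
    | refl => exact subset_rfl
    | step _ ih => exact (Set.diff_subset).trans ih
  have hkey : ∀ {n m : ℕ}, n < m → Disjoint (A n) (A m) := by
    intro n m h
    have hsub : A m ⊆ W n \ A n := (hAW m).trans (hWanti h)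
    exact Set.disjoint_right.mpr fun x hx => (hsub hx).2
  have hApair : Pairwise (Function.onFun Disjoint A) := by
    intro n m hnm
    rcases lt_or_gt_of_ne hnm with h | h
    · exact hkey h
    · exact (hkey h).symm
  have hUmeas : MeasurableSet (⋃ n, A n) := MeasurableSet.iUnion hAmeas
  set R : Set X := Set.univ \ ⋃ n, A n with hRdef
  have hRmeas : MeasurableSet R := MeasurableSet.univ.diff hUmeas
  have hRW : ∀ n, R ⊆ W n := by
    intro n
    induction n with
    | zero => exact fun x _ => Set.mem_univ x
    | succ k ih =>
      intro x hx
      exact ⟨ih hx, fun hxA => hx.2 (Set.mem_iUnion.mpr ⟨k, hxA⟩)⟩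
  have hRnull : μ R = 0 := by
    by_contra h0
    have hRpos : 0 < μ R := pos_iff_ne_zero.mpr h0
    obtain ⟨C, hCR, hCm, hCpos, hCd⟩ :=
      exists_disjoint_finset' hns hfree S hS1 R hRmeas hRpos
    have hbnd : ∀ n, μ C ≤ 2 * μ (A n) := fun n =>
      hFbnd (W n) C (hCR.trans (hRW n)) hCm hCd
    have htop : (⊤ : ℝ≥0∞) ≤ 2 * μ (⋃ n, A n) := by
      calc (⊤ : ℝ≥0∞) = ∑' _ : ℕ, μ C :=
            (ENNReal.tsum_const_eq_top_of_ne_zero hCpos.ne').symm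
        _ ≤ ∑' n, 2 * μ (A n) := ENNReal.tsum_le_tsum hbnd
        _ = 2 * ∑' n, μ (A n) := ENNReal.tsum_mul_left
        _ = 2 * μ (⋃ n, A n) := by rw [measure_iUnion hApair hAmeas]
    have hle : 2 * μ (⋃ n, A n) ≤ 2 * 1 := mul_le_mul_right prob_le_one 2
    have := htop.trans hle
    simp at this
  have hcompl : μ ((⋃ n, A n)ᶜ) = 0 := by
    rw [Set.compl_eq_univ_diff]
    exact hRnull
  have hU1 : μ (⋃ n, A n) = 1 := (prob_compl_eq_zero_iff hUmeas).mp hcompl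
  -- pairwise exact disjointness of translates
  have hinter : ∀ n, ∀ h ∈ H, ∀ h' ∈ H, h ≠ h' → (h • A n) ∩ (h' • A n) = ∅ := by
    intro n h hh h' hh' hne
    have hg : Disjoint ((h⁻¹ * h') • A n) (A n) := hAdisjS n _ (hSmem h hh h' hh' hne)
    have heq : h • A n ∩ h' • A n = h • (A n ∩ (h⁻¹ * h') • A n) := by
      rw [Set.smul_set_inter, smul_smul, mul_inv_cancel_left]
    rw [heq, Set.disjoint_iff_inter_eq_empty.mp hg.symm, Set.smul_set_empty]
  refine ⟨A, hAmeas, ?_, ?_, hRnull, ?_, ?_, ?_⟩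
  · -- H-sets
    intro n h hh h' hh' hne
    rw [hinter n h hh h' hh' hne]
    exact measure_empty
  · -- a.e. disjoint
    intro n m hnm
    rw [Set.disjoint_iff_inter_eq_empty.mp (hApair hnm)]
    exact measure_empty
  · -- multicover: measurability
    intro n
    exact H.measurableSet_biUnion fun h _ => smul_measurableSet' hns h (hAmeas n)
  · -- multicover: layers
    refine Filter.Eventually.of_forall fun x => ?_
    have step1 : ∀ n, (⋃ h ∈ H, h • A n).indicator (fun _ => (1 : ℝ≥0∞)) x ≤
        ∑ h ∈ H, (h • A n).indicator (fun _ => (1 : ℝ≥0∞)) x := by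
      intro n
      by_cases hx : x ∈ ⋃ h ∈ H, h • A n
      · rw [Set.indicator_of_mem hx]
        obtain ⟨h, hh, hxh⟩ := Set.mem_iUnion₂.mp hx
        calc (1 : ℝ≥0∞) = (h • A n).indicator (fun _ => (1 : ℝ≥0∞)) x :=
              (Set.indicator_of_mem hxh (fun _ => (1 : ℝ≥0∞))).symm
          _ ≤ ∑ h ∈ H, (h • A n).indicator (fun _ => (1 : ℝ≥0∞)) x :=
              Finset.single_le_sum
                (f := fun h => (h • A n).indicator (fun _ => (1 : ℝ≥0∞)) x)
                (fun _ _ => zero_le) hh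
      · rw [Set.indicator_of_notMem hx]
        exact zero_le
    have inner : ∀ h : G, ∑' n, (h • A n).indicator (fun _ => (1 : ℝ≥0∞)) x ≤ 1 := by
      intro h
      by_cases hx : ∃ n, x ∈ h • A n
      · obtain ⟨n₀, hn₀⟩ := hx
        have hz : ∀ m, m ≠ n₀ → (h • A m).indicator (fun _ => (1 : ℝ≥0∞)) x = 0 := by
          intro m hm
          apply Set.indicator_of_notMem
          intro hxm
          have h1 : h⁻¹ • x ∈ A n₀ := Set.mem_smul_set_iff_inv_smul_mem.mp hn₀
          have h2 : h⁻¹ • x ∈ A m := Set.mem_smul_set_iff_inv_smul_mem.mp hxm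
          exact (hApair (Ne.symm hm)).le_bot ⟨h1, h2⟩
        rw [tsum_eq_single n₀ hz, Set.indicator_of_mem hn₀]
      · push_neg at hx
        have : ∀ n, (h • A n).indicator (fun _ => (1 : ℝ≥0∞)) x = 0 := fun n =>
          Set.indicator_of_notMem (hx n) _
        simp [this]
    calc ∑' n, (⋃ h ∈ H, h • A n).indicator (fun _ => (1 : ℝ≥0∞)) x
        ≤ ∑' n, ∑ h ∈ H, (h • A n).indicator (fun _ => (1 : ℝ≥0∞)) x :=
          ENNReal.tsum_le_tsum step1
      _ = ∑ h ∈ H, ∑' n, (h • A n).indicator (fun _ => (1 : ℝ≥0∞)) x :=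
          Summable.tsum_finsetSum fun _ _ => ENNReal.summable
      _ ≤ ∑ h ∈ H, 1 := Finset.sum_le_sum fun h _ => inner h
      _ = (H.card : ℝ≥0∞) := by simp
  · -- multicover: total measure
    have hone : ∀ h : G, μ (h • ⋃ n, A n) = 1 := by
      intro h
      have hmeas : MeasurableSet (h • ⋃ n, A n) := smul_measurableSet' hns h hUmeas
      have hc : μ ((h • ⋃ n, A n)ᶜ) = 0 := by
        rw [← Set.smul_set_compl]
        exact (smul_null_iff' hns h hUmeas.compl).mpr hcompl
      exact (prob_compl_eq_zero_iff hmeas).mp hc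
    have hdisjn : ∀ h : G, Pairwise (Function.onFun Disjoint fun n => h • A n) := by
      intro h n m hnm
      apply Set.disjoint_iff_inter_eq_empty.mpr
      rw [← Set.smul_set_inter, Set.disjoint_iff_inter_eq_empty.mp (hApair hnm),
        Set.smul_set_empty]
    have hUn : ∀ n, μ (⋃ h ∈ H, h • A n) = ∑ h ∈ H, μ (h • A n) := by
      intro n
      apply measure_biUnion_finset
      · intro h hh h' hh' hne
        exact Set.disjoint_iff_inter_eq_empty.mpr (hinter n h hh h' hh' hne)
      · exact fun h _ => smul_measurableSet' hns h (hAmeas n)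
    have key : (H.card : ℝ≥0∞) = ∑' n, μ (⋃ h ∈ H, h • A n) := by
      calc (H.card : ℝ≥0∞) = ∑ h ∈ H, (1 : ℝ≥0∞) := by simp
        _ = ∑ h ∈ H, μ (h • ⋃ n, A n) := Finset.sum_congr rfl fun h _ => (hone h).symm
        _ = ∑ h ∈ H, μ (⋃ n, h • A n) := by
            refine Finset.sum_congr rfl fun h _ => ?_
            rw [Set.smul_set_iUnion]
        _ = ∑ h ∈ H, ∑' n, μ (h • A n) := by
            refine Finset.sum_congr rfl fun h _ => ?_
            exact measure_iUnion (hdisjn h) fun n => smul_measurableSet' hns h (hAmeas n)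
        _ = ∑' n, ∑ h ∈ H, μ (h • A n) := (Summable.tsum_finsetSum fun _ _ => ENNReal.summable).symm
        _ = ∑' n, μ (⋃ h ∈ H, h • A n) := by
            exact tsum_congr fun n => (hUn n).symm
    calc ENNReal.ofReal ((1 - 0) * H.card) = (H.card : ℝ≥0∞) := by
          rw [sub_zero, one_mul, ENNReal.ofReal_natCast]
      _ ≤ ∑' n, μ (⋃ h ∈ H, h • A n) := le_of_eq key
end

section
/- Let G be a countable group such that for every ε' > 0 and every finite K' ⊆ G there exists a finite (K', ε')-invariant subset of G (i.e., G is amenable), let (X, 𝓕, μ) be a σ-finite measure space, 1 ≤ p < ∞, and let π be an action of G on X by non-singular bi-measurable bijections, inducing the action ρ on Lᵖ(μ) given by ρ(g)f = (d((π g)_*μ)/dμ)^{1/p} · (f ∘ (π g)⁻¹). Then π is setwise free if and only if for every g ∈ G \ {1}, every u ∈ Lᵖ(μ) with u ≥ 0, and every ε > 0, there exist v, w ∈ Lᵖ(μ) with v ≥ 0, w ≥ 0 such that (1) v ≤ u + w and ‖w‖_p ≤ ε, (2) ‖v ⊓ ρ(g)v‖_p ≤ ε, and (3) ‖v‖_p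 ≥ (1/3)‖u‖_p − ε. -/
open MeasureTheory
open scoped ENNReal

variable {G X : Type*}

/-- The *`K`-boundary* of `H`: the set of `g ∈ G` such that `Kg` meets both `H` and its
complement. -/
def kBoundary [Group G] (K H : Set G) : Set G :=
  {g : G | (∃ k ∈ K, k * g ∈ H) ∧ ∃ k ∈ K, k * g ∉ H}

/-- A finite set `H ⊆ G` is *`(K, ε)`-invariant* if its `K`-boundary has fewer than `ε * |H|`
elements. -/
def KInvariant [Group G] (K : Finset G) (ε : ℝ) (H : Finset G) : Prop :=
  ((kBoundary (K : Set G) (H : Set G)).ncard : ℝ) < ε * H.card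

/-- An action `π` of `G` on a measure space by bijections is *non-singular* if each `π g` is
measurable (hence bi-measurable, as `(π g).symm = π g⁻¹`) and preserves nullity of measurable
sets. -/
def NonSingularHom [Group G] [MeasurableSpace X] (μ : Measure X)
    (π : G →* Equiv.Perm X) : Prop :=
  (∀ g : G, Measurable (π g)) ∧
  ∀ (g : G) (A : Set X), MeasurableSet A → (μ A = 0 ↔ μ ((π g) ⁻¹' A) = 0)

/-- The action `π` is *setwise free* if for every `g ≠ 1` and every measurable set `A` of
positive measure there is a positive-measure measurable `B ⊆ A` with `μ (gB ∆ B) > 0`. -/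
def SetwiseFreeHom [Group G] [MeasurableSpace X] (μ : Measure X)
    (π : G →* Equiv.Perm X) : Prop :=
  ∀ g : G, g ≠ 1 → ∀ A : Set X, MeasurableSet A → 0 < μ A →
    ∃ B : Set X, B ⊆ A ∧ MeasurableSet B ∧ 0 < μ B ∧ 0 < μ (symmDiff ((π g) '' B) B)

/-- The induced action `ρ(g) f = (d((π g)_*μ)/dμ)^{1/p} · (f ∘ (π g)⁻¹)` on `Lᵖ(μ)`. -/
noncomputable def inducedLpAction [Group G] [MeasurableSpace X] (μ : Measure X)
    (π : G →* Equiv.Perm X) (p : ℝ) (g : G) (f : X → ℝ) : X → ℝ :=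
  fun x => (((Measure.map (π g) μ).rnDeriv μ x).toReal) ^ (1 / p) * f ((π g).symm x)

open Set
open scoped symmDiff

section AuxLemmas

variable [Group G] [MeasurableSpace X] {μ : Measure X} {π : G →* Equiv.Perm X}

lemma perm_symm_eq (g : G) : ⇑(π g).symm = ⇑(π g⁻¹) := by
  rw [map_inv, Equiv.Perm.inv_def]

lemma perm_image_eq (g : G) (B : Set X) : (π g) '' B = (π g⁻¹) ⁻¹' B := by
  rw [Equiv.image_eq_preimage_symm, perm_symm_eq]

lemma null_preimage (hns : NonSingularHom μ π) (g : G) {N : Set X} (hN : μ N = 0) :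
    μ ((π g) ⁻¹' N) = 0 := by
  have h1 : μ (toMeasurable μ N) = 0 := by rwa [measure_toMeasurable]
  have h2 := (hns.2 g _ (measurableSet_toMeasurable μ N)).1 h1
  exact measure_mono_null (Set.preimage_mono (subset_toMeasurable μ N)) h2

lemma null_image (hns : NonSingularHom μ π) (g : G) {N : Set X} (hN : μ N = 0) :
    μ ((π g) '' N) = 0 := by
  rw [perm_image_eq]; exact null_preimage hns g⁻¹ hN

lemma pos_preimage (hns : NonSingularHom μ π) (g : G) {S : Set X} (hS : MeasurableSet S)
    (h : 0 < μ S) : 0 < μ ((π g) ⁻¹' S) := by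
  rw [pos_iff_ne_zero] at h ⊢
  exact fun h0 => h ((hns.2 g S hS).2 h0)

end AuxLemmas

set_option linter.unusedSectionVars false

section Exhaustion

variable [Group G] [MeasurableSpace X] {μ : Measure X} {π : G →* Equiv.Perm X}

/-- Key exhaustion lemma. Here `gA = (π g⁻¹) ⁻¹' A` and `g⁻¹A = (π g) ⁻¹' A`. -/
lemma exists_wandering_cover [SigmaFinite μ] (hns : NonSingularHom μ π) (g : G)
    (hfree : ∀ A : Set X, MeasurableSet A → 0 < μ A →
      ∃ B : Set X, B ⊆ A ∧ MeasurableSet B ∧ 0 < μ B ∧ 0 < μ (symmDiff ((π g) '' B) B)) :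
    ∃ A : Set X, MeasurableSet A ∧ μ (A ∩ (π g⁻¹) ⁻¹' A) = 0 ∧
      μ ((A ∪ (π g⁻¹) ⁻¹' A ∪ (π g) ⁻¹' A)ᶜ) = 0 := by
  classical
  obtain ⟨ν, hνfin, hμν, hνμ⟩ := exists_isFiniteMeasure_absolutelyContinuous μ
  set T : Set X → Set X := fun S => (π g⁻¹) ⁻¹' S with hT
  set Ti : Set X → Set X := fun S => (π g) ⁻¹' S with hTi
  have hgg : ∀ x : X, (π g) ((π g⁻¹) x) = x := by
    intro x; rw [map_inv, Equiv.Perm.inv_def, Equiv.apply_symm_apply]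
  have hgg' : ∀ x : X, (π g⁻¹) ((π g) x) = x := by
    intro x; rw [map_inv, Equiv.Perm.inv_def, Equiv.symm_apply_apply]
  have hTTi : ∀ S : Set X, T (Ti S) = S := by
    intro S; ext x; simp only [hT, hTi, Set.mem_preimage, hgg]
  have hTiT : ∀ S : Set X, Ti (T S) = S := by
    intro S; ext x; simp only [hT, hTi, Set.mem_preimage, hgg']
  have hTmeas : ∀ {S : Set X}, MeasurableSet S → MeasurableSet (T S) :=
    fun hS => hns.1 g⁻¹ hS
  have hTimeas : ∀ {S : Set X}, MeasurableSet S → MeasurableSet (Ti S) :=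
    fun hS => hns.1 g hS
  set cand : Set X → Set X → Prop := fun A C =>
    MeasurableSet C ∧ C ∩ (A ∪ T A ∪ Ti A) = ∅ ∧ C ∩ T C = ∅ with hcand
  have cand_empty : ∀ A, cand A ∅ :=
    fun A => ⟨MeasurableSet.empty, by simp, by simp⟩
  set s : Set X → ℝ≥0∞ := fun A => ⨆ (C : {C : Set X // cand A C}), ν (C : Set X) with hs
  have s_ne_top : ∀ A, s A ≠ ∞ := by
    intro A
    refine ne_top_of_le_ne_top (measure_ne_top ν univ) ?_
    exact iSup_le fun C => measure_mono (subset_univ _)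
  have s_le : ∀ A C, cand A C → ν C ≤ s A := by
    intro A C hC
    exact le_iSup (fun (C : {C : Set X // cand A C}) => ν (C : Set X)) ⟨C, hC⟩
  have step : ∀ A : Set X, ∃ C, cand A C ∧ s A ≤ 2 * ν C := by
    intro A
    rcases eq_or_ne (s A) 0 with h0 | h0
    · exact ⟨∅, cand_empty A, by simp [h0]⟩
    · have hlt : s A / 2 < s A := ENNReal.half_lt_self h0 (s_ne_top A)
      conv at hlt => rw [hs]
      rw [lt_iSup_iff] at hlt
      obtain ⟨⟨C, hC⟩, hCgt⟩ := hlt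
      refine ⟨C, hC, ?_⟩
      calc s A = 2 * (s A / 2) := by
            rw [ENNReal.mul_div_cancel' (by norm_num) (by norm_num)]
        _ ≤ 2 * ν C := mul_le_mul_right hCgt.le 2
  choose Cf hCf_cand hCf_ge using step
  set Aseq : ℕ → Set X := fun n => Nat.rec ∅ (fun _ A => A ∪ Cf A) n with hAseq
  have hAseq_succ : ∀ n, Aseq (n + 1) = Aseq n ∪ Cf (Aseq n) := fun n => rfl
  have hAmeas : ∀ n, MeasurableSet (Aseq n) := by
    intro n; induction n with
    | zero => exact MeasurableSet.empty
    | succ n ih => rw [hAseq_succ]; exact ih.union (hCf_cand (Aseq n)).1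
  have hAmono : Monotone Aseq := by
    apply monotone_nat_of_le_succ
    intro n; rw [hAseq_succ]; exact subset_union_left
  have hAnull : ∀ n, μ (Aseq n ∩ T (Aseq n)) = 0 := by
    intro n; induction n with
    | zero =>
      have : Aseq 0 = (∅ : Set X) := rfl
      rw [this]; simp
    | succ n ih =>
      rw [hAseq_succ]
      obtain ⟨hCmeas, hCdisj, hCT⟩ := hCf_cand (Aseq n)
      have hsub : (Aseq n ∪ Cf (Aseq n)) ∩ T (Aseq n ∪ Cf (Aseq n)) ⊆
          Aseq n ∩ T (Aseq n) := by
        rintro x ⟨hx1 | hx1, hx2⟩ <;>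
          rcases (show T (Aseq n ∪ Cf (Aseq n)) = T (Aseq n) ∪ T (Cf (Aseq n)) from rfl) ▸ hx2
            with hx2 | hx2
        · exact ⟨hx1, hx2⟩
        · exfalso
          have hy : (π g⁻¹) x ∈ Cf (Aseq n) ∩ (Aseq n ∪ T (Aseq n) ∪ Ti (Aseq n)) := by
            refine ⟨hx2, Or.inr ?_⟩
            show (π g) ((π g⁻¹) x) ∈ Aseq n
            rw [hgg]; exact hx1
          rw [hCdisj] at hy; exact hy
        · exfalso
          have hy : x ∈ Cf (Aseq n) ∩ (Aseq n ∪ T (Aseq n) ∪ Ti (Aseq n)) :=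
            ⟨hx1, Or.inl (Or.inr hx2)⟩
          rw [hCdisj] at hy; exact hy
        · exfalso
          have hy : x ∈ Cf (Aseq n) ∩ T (Cf (Aseq n)) := ⟨hx1, hx2⟩
          rw [hCT] at hy; exact hy
      exact measure_mono_null hsub ih
  set Ainf : Set X := ⋃ n, Aseq n with hAinf
  have hAinf_meas : MeasurableSet Ainf := MeasurableSet.iUnion hAmeas
  have hAinf_null : μ (Ainf ∩ T Ainf) = 0 := by
    have hsub : Ainf ∩ T Ainf ⊆ ⋃ n, (Aseq n ∩ T (Aseq n)) := by
      rintro x ⟨hx1, hx2⟩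
      simp only [hAinf, mem_iUnion] at hx1
      obtain ⟨n, hn⟩ := hx1
      have hx2' : (π g⁻¹) x ∈ Ainf := hx2
      simp only [hAinf, mem_iUnion] at hx2'
      obtain ⟨m, hm⟩ := hx2'
      exact mem_iUnion.2 ⟨max n m, hAmono (le_max_left n m) hn,
        hAmono (le_max_right n m) hm⟩
    exact measure_mono_null hsub (measure_iUnion_null fun n => hAnull n)
  refine ⟨Ainf, hAinf_meas, hAinf_null, ?_⟩
  by_contra hR
  have hRpos : 0 < μ ((Ainf ∪ T Ainf ∪ Ti Ainf)ᶜ) := pos_iff_ne_zero.2 hR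
  have hRmeas : MeasurableSet ((Ainf ∪ T Ainf ∪ Ti Ainf)ᶜ) :=
    ((hAinf_meas.union (hTmeas hAinf_meas)).union (hTimeas hAinf_meas)).compl
  obtain ⟨B, hBsub, hBmeas, hBpos, hBsd⟩ := hfree _ hRmeas hRpos
  rw [show (π g) '' B = T B from perm_image_eq g B] at hBsd
  obtain ⟨C, hCmeas, hCsubR, hCT, hCpos⟩ :
      ∃ C : Set X, MeasurableSet C ∧ C ⊆ (Ainf ∪ T Ainf ∪ Ti Ainf)ᶜ ∧
        C ∩ T C = ∅ ∧ 0 < μ C := by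
    rcases eq_or_ne (μ (B \ T B)) 0 with h1 | h1
    · have h2 : 0 < μ (T B \ B) := by
        rw [pos_iff_ne_zero]
        intro h2
        apply pos_iff_ne_zero.1 hBsd
        rw [Set.symmDiff_def]
        exact measure_union_null h2 h1
      refine ⟨B \ Ti B, hBmeas.diff (hTimeas hBmeas), fun x hx => hBsub hx.1, ?_, ?_⟩
      · have hTe : T (B \ Ti B) = T B \ B := by
          show (π g⁻¹) ⁻¹' (B \ Ti B) = T B \ B
          rw [preimage_diff]
          exact congrArg (fun S => T B \ S) (hTTi B)
        rw [hTe]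
        apply eq_empty_iff_forall_notMem.2
        rintro x ⟨⟨hb, _⟩, _, hnb⟩
        exact hnb hb
      · have he : Ti (T B \ B) = B \ Ti B := by
          show (π g) ⁻¹' (T B \ B) = B \ Ti B
          rw [preimage_diff]
          exact congrArg (fun S => S \ Ti B) (hTiT B)
        rw [← he]
        exact pos_preimage hns g ((hTmeas hBmeas).diff hBmeas) h2
    · refine ⟨B \ T B, hBmeas.diff (hTmeas hBmeas), fun x hx => hBsub hx.1, ?_,
        pos_iff_ne_zero.2 h1⟩
      apply eq_empty_iff_forall_notMem.2
      rintro x ⟨⟨hb, hnb⟩, hx2⟩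
      exact hnb (show x ∈ T B from preimage_mono diff_subset hx2)
  have hcandC : ∀ n, cand (Aseq n) C := by
    intro n
    refine ⟨hCmeas, ?_, hCT⟩
    apply eq_empty_iff_forall_notMem.2
    rintro x ⟨hxC, hx⟩
    apply hCsubR hxC
    have hsub : Aseq n ⊆ Ainf := subset_iUnion Aseq n
    rcases hx with (hx | hx) | hx
    · exact Or.inl (Or.inl (hsub hx))
    · exact Or.inl (Or.inr (preimage_mono hsub hx))
    · exact Or.inr (preimage_mono hsub hx)
  have hνC : ν C ≠ 0 := fun h0 => (pos_iff_ne_zero.1 hCpos) (hμν h0)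
  have hgrow : ∀ n : ℕ, (n : ℝ≥0∞) * ν C ≤ 2 * ν (Aseq n) := by
    intro n; induction n with
    | zero => simp
    | succ n ih =>
      have hdisj : Disjoint (Aseq n) (Cf (Aseq n)) := by
        rw [Set.disjoint_right]
        intro x hxC hxA
        have hy : x ∈ Cf (Aseq n) ∩ (Aseq n ∪ T (Aseq n) ∪ Ti (Aseq n)) :=
          ⟨hxC, Or.inl (Or.inl hxA)⟩
        rw [(hCf_cand (Aseq n)).2.1] at hy; exact hy
      have hν_add : ν (Aseq (n + 1)) = ν (Aseq n) + ν (Cf (Aseq n)) := by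
        rw [hAseq_succ]; exact measure_union hdisj (hCf_cand (Aseq n)).1
      have hCn : ν C ≤ 2 * ν (Cf (Aseq n)) := (s_le _ _ (hcandC n)).trans (hCf_ge _)
      push_cast
      calc ((n : ℝ≥0∞) + 1) * ν C = (n : ℝ≥0∞) * ν C + ν C := by ring
        _ ≤ 2 * ν (Aseq n) + 2 * ν (Cf (Aseq n)) := add_le_add ih hCn
        _ = 2 * ν (Aseq (n + 1)) := by rw [hν_add]; ring
  have htop : (⊤ : ℝ≥0∞) * ν C ≤ 2 * ν univ := by
    rw [← ENNReal.iSup_natCast, ENNReal.iSup_mul]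
    exact iSup_le fun n => (hgrow n).trans
      (mul_le_mul_right (measure_mono (subset_univ _)) 2)
  rw [ENNReal.top_mul hνC] at htop
  exact (ENNReal.mul_ne_top (by norm_num) (measure_ne_top ν univ))
    (top_le_iff.1 htop)

end Exhaustion

section Forward

variable [Group G] [MeasurableSpace X] {μ : Measure X} {π : G →* Equiv.Perm X}

lemma forward_dir [SigmaFinite μ] (hns : NonSingularHom μ π) {p : ℝ} (hp : 1 ≤ p)
    (hsf : SetwiseFreeHom μ π) (g : G) (hg : g ≠ 1) (u : X → ℝ)
    (hu : MemLp u (ENNReal.ofReal p) μ) (hu0 : ∀ᵐ x ∂μ, 0 ≤ u x) (ε : ℝ) (hε : 0 < ε) :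
    ∃ v w : X → ℝ, MemLp v (ENNReal.ofReal p) μ ∧ MemLp w (ENNReal.ofReal p) μ ∧
      (∀ᵐ x ∂μ, 0 ≤ v x) ∧ (∀ᵐ x ∂μ, 0 ≤ w x) ∧
      (∀ᵐ x ∂μ, v x ≤ u x + w x) ∧
      eLpNorm w (ENNReal.ofReal p) μ ≤ ENNReal.ofReal ε ∧
      eLpNorm (fun x => min (v x) (inducedLpAction μ π p g v x)) (ENNReal.ofReal p) μ ≤
        ENNReal.ofReal ε ∧
      (1 / 3) * (eLpNorm u (ENNReal.ofReal p) μ).toReal - ε ≤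
        (eLpNorm v (ENNReal.ofReal p) μ).toReal := by
  classical
  have hp0 : 0 < p := lt_of_lt_of_le one_pos hp
  set q := ENNReal.ofReal p with hqdef
  have hq0 : q ≠ 0 := by
    simp only [hqdef, ne_eq, ENNReal.ofReal_eq_zero, not_le]; exact hp0
  have hqt : q ≠ ∞ := ENNReal.ofReal_ne_top
  have hqr : q.toReal = p := ENNReal.toReal_ofReal hp0.le
  -- measurable representative of u
  set u' := hu.1.mk u with hu'def
  have huu' : u =ᵐ[μ] u' := hu.1.ae_eq_mk
  have hu'meas : Measurable u' := hu.1.stronglyMeasurable_mk.measurable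
  have hu'0 : ∀ᵐ x ∂μ, 0 ≤ u' x := by
    filter_upwards [hu0, huu'] with x h1 h2; rw [← h2]; exact h1
  have hu'mem : MemLp u' q μ := hu.ae_eq huu'
  obtain ⟨A, hA, hAnull, hAcover⟩ := exists_wandering_cover hns g (hsf g hg)
  set T : Set X → Set X := fun S => (π g⁻¹) ⁻¹' S with hT
  set Ti : Set X → Set X := fun S => (π g) ⁻¹' S with hTi
  have hgg : ∀ x : X, (π g) ((π g⁻¹) x) = x := by
    intro x; rw [map_inv, Equiv.Perm.inv_def, Equiv.apply_symm_apply]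
  have hgg' : ∀ x : X, (π g⁻¹) ((π g) x) = x := by
    intro x; rw [map_inv, Equiv.Perm.inv_def, Equiv.symm_apply_apply]
  set P0 : Set X := A with hP0def
  set P1 : Set X := T A \ A with hP1def
  set P2 : Set X := Ti A \ (A ∪ T A) with hP2def
  have hP0meas : MeasurableSet P0 := hA
  have hP1meas : MeasurableSet P1 := (hns.1 g⁻¹ hA).diff hA
  have hP2meas : MeasurableSet P2 := (hns.1 g hA).diff (hA.union (hns.1 g⁻¹ hA))
  have hP0null : μ (P0 ∩ T P0) = 0 := hAnull
  have hP1null : μ (P1 ∩ T P1) = 0 := by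
    have : P1 ∩ T P1 = ∅ := by
      apply eq_empty_iff_forall_notMem.2
      rintro x ⟨⟨hx1, _⟩, hx2⟩
      exact ((show (π g⁻¹) x ∈ T A \ A from hx2).2)
        (show (π g⁻¹) x ∈ A from hx1)
    rw [this]; simp
  have hP2null : μ (P2 ∩ T P2) = 0 := by
    have : P2 ∩ T P2 = ∅ := by
      apply eq_empty_iff_forall_notMem.2
      rintro x ⟨⟨_, hx1⟩, hx2⟩
      have h2 : (π g⁻¹) x ∈ Ti A \ (A ∪ T A) := hx2
      exact hx1 (Or.inl (show x ∈ A by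
        have := h2.1
        show x ∈ A
        rw [← hgg x]; exact this))
    rw [this]; simp
  have hcover : P0 ∪ P1 ∪ P2 = A ∪ T A ∪ Ti A := by
    rw [hP0def, hP1def, hP2def]
    ext x
    simp only [mem_union, mem_diff]
    tauto
  -- the a.e. cover
  have hae_cover : ∀ᵐ x ∂μ, x ∈ P0 ∪ P1 ∪ P2 := by
    have h1 : ∀ᵐ x ∂μ, x ∉ (A ∪ T A ∪ Ti A)ᶜ := measure_eq_zero_iff_ae_notMem.mp hAcover
    filter_upwards [h1] with x hx
    rw [hcover]
    by_contra hc
    exact hx hc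
  -- the p-th power integrand
  set f : X → ℝ≥0∞ := fun x => ((‖u' x‖₊ : ℝ≥0∞)) ^ p with hfdef
  have hfmeas : Measurable f := (hu'meas.nnnorm.coe_nnreal_ennreal.pow measurable_const)
  have hsum : ∫⁻ x, f x ∂μ ≤
      (∫⁻ x in P0, f x ∂μ) + (∫⁻ x in P1, f x ∂μ) + (∫⁻ x in P2, f x ∂μ) := by
    have hle : ∫⁻ x, f x ∂μ ≤
        ∫⁻ x, (P0.indicator f x + P1.indicator f x + P2.indicator f x) ∂μ := by
      apply lintegral_mono_ae
      filter_upwards [hae_cover] with x hx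
      rcases hx with (hx | hx) | hx
      · calc f x = P0.indicator f x := (Set.indicator_of_mem hx f).symm
          _ ≤ P0.indicator f x + P1.indicator f x := le_self_add
          _ ≤ _ := le_self_add
      · calc f x = P1.indicator f x := (Set.indicator_of_mem hx f).symm
          _ ≤ P0.indicator f x + P1.indicator f x := le_add_self
          _ ≤ _ := le_self_add
      · calc f x = P2.indicator f x := (Set.indicator_of_mem hx f).symm
          _ ≤ _ := le_add_self
    calc ∫⁻ x, f x ∂μ ≤ _ := hle
      _ = (∫⁻ x in P0, f x ∂μ) + (∫⁻ x in P1, f x ∂μ) + (∫⁻ x in P2, f x ∂μ) := by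
        rw [lintegral_add_right _ (hfmeas.indicator hP2meas),
          lintegral_add_right _ (hfmeas.indicator hP1meas),
          lintegral_indicator hP0meas, lintegral_indicator hP1meas,
          lintegral_indicator hP2meas]
  obtain ⟨P, hPmeas, hPnull, hPbig⟩ : ∃ P, MeasurableSet P ∧ μ (P ∩ T P) = 0 ∧
      ∫⁻ x, f x ∂μ ≤ 3 * ∫⁻ x in P, f x ∂μ := by
    set I0 := ∫⁻ x in P0, f x ∂μ
    set I1 := ∫⁻ x in P1, f x ∂μ
    set I2 := ∫⁻ x in P2, f x ∂μ
    rcases le_total I0 I1 with h01 | h01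
    · rcases le_total I1 I2 with h12 | h12
      · refine ⟨P2, hP2meas, hP2null, hsum.trans ?_⟩
        calc I0 + I1 + I2 ≤ I2 + I2 + I2 := by gcongr; exact h01.trans h12
          _ = 3 * I2 := by ring
      · refine ⟨P1, hP1meas, hP1null, hsum.trans ?_⟩
        calc I0 + I1 + I2 ≤ I1 + I1 + I1 := by gcongr
          _ = 3 * I1 := by ring
    · rcases le_total I0 I2 with h02 | h02
      · refine ⟨P2, hP2meas, hP2null, hsum.trans ?_⟩
        calc I0 + I1 + I2 ≤ I2 + I2 + I2 := by gcongr; exact h01.trans h02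
          _ = 3 * I2 := by ring
      · refine ⟨P0, hP0meas, hP0null, hsum.trans ?_⟩
        calc I0 + I1 + I2 ≤ I0 + I0 + I0 := by gcongr
          _ = 3 * I0 := by ring
  -- define v and w
  refine ⟨P.indicator u', fun _ => 0, hu'mem.indicator hPmeas, MemLp.zero', ?_, ?_, ?_, ?_, ?_, ?_⟩
  · -- 0 ≤ v a.e.
    filter_upwards [hu'0] with x hx
    exact Set.indicator_apply_nonneg fun _ => hx
  · -- 0 ≤ w a.e.
    filter_upwards with x; exact le_rfl
  · -- v ≤ u + w a.e.
    filter_upwards [hu0, huu'] with x h1 h2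
    rw [add_zero]
    by_cases hx : x ∈ P
    · rw [Set.indicator_of_mem hx, ← h2]
    · rw [Set.indicator_of_notMem hx]; exact h1
  · -- ‖w‖ ≤ ε
    rw [eLpNorm_zero']
    exact bot_le
  · -- ‖v ⊓ ρ v‖ ≤ ε
    have hNnull : μ {x | u' x < 0} = 0 := by
      have h := ae_iff.mp hu'0
      simpa [not_le] using h
    have hN2null : μ ((π g⁻¹) ⁻¹' {x | u' x < 0}) = 0 := null_preimage hns g⁻¹ hNnull
    have hmin : (fun x => min (P.indicator u' x) (inducedLpAction μ π p g (P.indicator u') x))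
        =ᵐ[μ] (fun _ => (0 : ℝ)) := by
      filter_upwards [measure_eq_zero_iff_ae_notMem.mp hNnull,
        measure_eq_zero_iff_ae_notMem.mp hN2null,
        measure_eq_zero_iff_ae_notMem.mp hPnull] with x hx1 hx2 hx3
      have hsymm : (π g).symm x = (π g⁻¹) x := by
        rw [map_inv, Equiv.Perm.inv_def]
      simp only [inducedLpAction, hsymm]
      by_cases hx : x ∈ P
      · have hnx : (π g⁻¹) x ∉ P := fun hmem => hx3 ⟨hx, hmem⟩
        rw [Set.indicator_of_notMem hnx, mul_zero, Set.indicator_of_mem hx]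
        exact min_eq_right (not_lt.1 (by simpa using hx1))
      · rw [Set.indicator_of_notMem hx]
        refine min_eq_left ?_
        exact mul_nonneg (Real.rpow_nonneg ENNReal.toReal_nonneg _)
          (Set.indicator_apply_nonneg fun _ => not_lt.1 (by simpa using hx2))
    rw [eLpNorm_congr_ae hmin, eLpNorm_zero']
    exact bot_le
  · -- norm lower bound
    have hvnorm : eLpNorm (P.indicator u') q μ = (∫⁻ x in P, f x ∂μ) ^ (1 / p) := by
      rw [eLpNorm_eq_lintegral_rpow_enorm_toReal hq0 hqt, hqr]
      congr 1
      rw [← lintegral_indicator hPmeas]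
      congr 1
      funext x
      by_cases hx : x ∈ P
      · simp [Set.indicator_of_mem hx, hfdef, enorm_eq_nnnorm]
      · simp [Set.indicator_of_notMem hx, hfdef, ENNReal.zero_rpow_of_pos hp0]
    have hunorm : eLpNorm u q μ = (∫⁻ x, f x ∂μ) ^ (1 / p) := by
      rw [eLpNorm_congr_ae huu', eLpNorm_eq_lintegral_rpow_enorm_toReal hq0 hqt, hqr]
      rfl
    have hkey : eLpNorm u q μ ≤ (3 : ℝ≥0∞) ^ (1 / p) * eLpNorm (P.indicator u') q μ := by
      rw [hunorm, hvnorm, ← ENNReal.mul_rpow_of_nonneg _ _ (one_div_nonneg.2 hp0.le)]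
      exact ENNReal.rpow_le_rpow hPbig (one_div_nonneg.2 hp0.le)
    have hv_fin : eLpNorm (P.indicator u') q μ ≠ ∞ := (hu'mem.indicator hPmeas).2.ne
    have h3t : ((3 : ℝ≥0∞) ^ (1 / p)) ≠ ∞ :=
      ENNReal.rpow_ne_top_of_nonneg (one_div_nonneg.2 hp0.le) (by norm_num)
    have htr := ENNReal.toReal_mono (ENNReal.mul_ne_top h3t hv_fin) hkey
    rw [ENNReal.toReal_mul] at htr
    have h3r : ((3 : ℝ≥0∞) ^ (1 / p)).toReal = (3 : ℝ) ^ (1 / p) := by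
      rw [← ENNReal.toReal_rpow]; norm_num
    rw [h3r] at htr
    have h3le : (3 : ℝ) ^ (1 / p) ≤ 3 := by
      calc (3 : ℝ) ^ (1 / p) ≤ (3 : ℝ) ^ (1 : ℝ) :=
            Real.rpow_le_rpow_of_exponent_le (by norm_num)
              (by rw [div_le_one hp0]; exact hp)
        _ = 3 := Real.rpow_one 3
    have hv0 : 0 ≤ (eLpNorm (P.indicator u') q μ).toReal := ENNReal.toReal_nonneg
    nlinarith [htr, h3le, hv0, hε,
      mul_le_mul_of_nonneg_right h3le hv0]

end Forward

section Backward

variable [Group G] [MeasurableSpace X] {μ : Measure X} {π : G →* Equiv.Perm X}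

lemma eq_of_forall_rat_lt_iff {a b : ℝ} (h : ∀ q : ℚ, (q : ℝ) < a ↔ (q : ℝ) < b) : a = b := by
  by_contra hne
  rcases lt_or_gt_of_ne hne with hlt | hlt
  · obtain ⟨q, hq1, hq2⟩ := exists_rat_btwn hlt
    exact absurd ((h q).2 hq2) (not_lt.2 hq1.le)
  · obtain ⟨q, hq1, hq2⟩ := exists_rat_btwn hlt
    exact absurd ((h q).1 hq2) (not_lt.2 hq1.le)

lemma backward_dir [SigmaFinite μ] (hns : NonSingularHom μ π) {p : ℝ} (hp : 1 ≤ p)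
    (hmain : ∀ g : G, g ≠ 1 → ∀ u : X → ℝ, MemLp u (ENNReal.ofReal p) μ →
        (∀ᵐ x ∂μ, 0 ≤ u x) → ∀ ε : ℝ, 0 < ε →
        ∃ v w : X → ℝ, MemLp v (ENNReal.ofReal p) μ ∧ MemLp w (ENNReal.ofReal p) μ ∧
          (∀ᵐ x ∂μ, 0 ≤ v x) ∧ (∀ᵐ x ∂μ, 0 ≤ w x) ∧
          (∀ᵐ x ∂μ, v x ≤ u x + w x) ∧
          eLpNorm w (ENNReal.ofReal p) μ ≤ ENNReal.ofReal ε ∧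
          eLpNorm (fun x => min (v x) (inducedLpAction μ π p g v x)) (ENNReal.ofReal p) μ ≤
            ENNReal.ofReal ε ∧
          (1 / 3) * (eLpNorm u (ENNReal.ofReal p) μ).toReal - ε ≤
            (eLpNorm v (ENNReal.ofReal p) μ).toReal) :
    SetwiseFreeHom μ π := by
  classical
  intro g hg A hA hApos
  by_contra hcon
  push_neg at hcon
  have hp0 : 0 < p := lt_of_lt_of_le one_pos hp
  set q := ENNReal.ofReal p with hqdef
  have hq0 : q ≠ 0 := by
    simp only [hqdef, ne_eq, ENNReal.ofReal_eq_zero, not_le]; exact hp0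
  have hqt : q ≠ ∞ := ENNReal.ofReal_ne_top
  have hqr : q.toReal = p := ENNReal.toReal_ofReal hp0.le
  have hq1 : 1 ≤ q := by
    rw [hqdef, ← ENNReal.ofReal_one]
    exact ENNReal.ofReal_le_ofReal hp
  obtain ⟨A', hA'meas, hA'sub, hA'pos, hA'fin⟩ := Measure.exists_subset_measure_lt_top hA hApos
  -- every measurable subset of A' is a.e. invariant
  have hinv : ∀ B : Set X, B ⊆ A' → MeasurableSet B → μ (symmDiff ((π g) '' B) B) = 0 := by
    intro B hB hBmeas
    rcases eq_or_ne (μ B) 0 with h0 | h0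
    · exact measure_mono_null symmDiff_subset_union
        (measure_union_null (null_image hns g h0) h0)
    · exact le_zero_iff.1 (hcon B (hB.trans hA'sub) hBmeas (pos_iff_ne_zero.2 h0))
  have hmeq : ∀ B : Set X, B ⊆ A' → MeasurableSet B → μ ((π g) ⁻¹' B) = μ B := by
    intro B hB hBmeas
    have h2 : μ (symmDiff ((π g) ⁻¹' ((π g) '' B)) ((π g) ⁻¹' B)) = 0 := by
      rw [← Set.preimage_symmDiff]
      exact null_preimage hns g (hinv B hB hBmeas)
    rw [Equiv.preimage_image] at h2
    exact (measure_congr (measure_symmDiff_eq_zero_iff.1 h2)).symm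
  -- the test function u
  set u : X → ℝ := A'.indicator (fun _ => (1 : ℝ)) with hudef
  have hu_mem : MemLp u q μ := memLp_indicator_const q hA'meas 1 (Or.inr hA'fin.ne)
  have hu0 : ∀ᵐ x ∂μ, 0 ≤ u x := by
    filter_upwards with x
    exact Set.indicator_apply_nonneg fun _ => zero_le_one
  have heLu : eLpNorm u q μ = μ A' ^ (1 / p) := by
    rw [hudef, eLpNorm_indicator_const hA'meas hq0 hqt, hqr]
    simp
  have hu_ne : eLpNorm u q μ ≠ 0 := by
    rw [heLu]
    exact (ENNReal.rpow_pos hA'pos hA'fin.ne).ne'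
  have hnr : 0 < (eLpNorm u q μ).toReal :=
    ENNReal.toReal_pos hu_ne hu_mem.2.ne
  set nr := (eLpNorm u q μ).toReal with hnrdef
  set ε := nr / 10 with hεdef
  have hε : 0 < ε := by positivity
  obtain ⟨v, w, hv, hw, hv0, hw0, hvuw, hwnorm, hmin, hlow⟩ := hmain g hg u hu_mem hu0 ε hε
  -- the Radon-Nikodym derivative is 1 a.e. on A'
  have hmeasg : Measurable (⇑(π g)) := hns.1 g
  have hmeasginv : Measurable ⇑(π g).symm := by
    have h : ⇑(π g).symm = ⇑(π g⁻¹) := perm_symm_eq g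
    rw [h]; exact hns.1 g⁻¹
  let e : X ≃ᵐ X := ⟨π g, hmeasg, hmeasginv⟩
  haveI hsfin : SigmaFinite (Measure.map (⇑(π g)) μ) := by
    have h := MeasurableEquiv.sigmaFinite_map (μ := μ) e
    exact (show ⇑e = ⇑(π g) from rfl) ▸ h
  have habs : Measure.map (⇑(π g)) μ ≪ μ := by
    refine Measure.AbsolutelyContinuous.mk fun s hs h0 => ?_
    rw [Measure.map_apply hmeasg hs]
    exact (hns.2 g s hs).1 h0
  have hD : ∀ᵐ x ∂μ, x ∈ A' → (Measure.map (⇑(π g)) μ).rnDeriv μ x = 1 := by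
    have hint : ∀ s : Set X, MeasurableSet s → (μ.restrict A') s < ∞ →
        ∫⁻ x in s, (Measure.map (⇑(π g)) μ).rnDeriv μ x ∂(μ.restrict A') =
          ∫⁻ x in s, (1 : ℝ≥0∞) ∂(μ.restrict A') := by
      intro s hs _
      rw [Measure.restrict_restrict hs,
        Measure.setLIntegral_rnDeriv' habs (hs.inter hA'meas), setLIntegral_one,
        Measure.map_apply hmeasg (hs.inter hA'meas),
        hmeq _ inter_subset_right (hs.inter hA'meas)]
    have hDae : (Measure.map (⇑(π g)) μ).rnDeriv μ =ᵐ[μ.restrict A'] (fun _ => (1 : ℝ≥0∞)) :=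
      ae_eq_of_forall_setLIntegral_eq_of_sigmaFinite₀
        (Measure.measurable_rnDeriv _ _).aemeasurable aemeasurable_const hint
    exact (ae_restrict_iff' hA'meas).1 hDae
  -- measurable representative of v
  set v' := hv.1.mk v with hv'def
  have hvv' : v =ᵐ[μ] v' := hv.1.ae_eq_mk
  have hv'meas : Measurable v' := hv.1.stronglyMeasurable_mk.measurable
  -- membership transfer for invariant sets
  have hmem_iff : ∀ B : Set X, μ (symmDiff ((π g) '' B) B) = 0 →
      ∀ᵐ x ∂μ, ((π g).symm x ∈ B ↔ x ∈ B) := by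
    intro B h0
    filter_upwards [measure_eq_zero_iff_ae_notMem.mp h0] with x hx
    rw [Set.mem_symmDiff] at hx
    push_neg at hx
    have himg : x ∈ (π g) '' B ↔ (π g).symm x ∈ B := by
      rw [Equiv.image_eq_preimage_symm]; exact Iff.rfl
    exact ⟨fun h => hx.1 (himg.2 h), fun h => himg.1 (hx.2 h)⟩
  have hvT : ∀ᵐ x ∂μ, x ∈ A' → v' ((π g).symm x) = v' x := by
    have hA'iff := hmem_iff A' (hinv A' subset_rfl hA'meas)
    have hQ : ∀ᵐ x ∂μ, ∀ qr : ℚ,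
        ((π g).symm x ∈ A' ∩ {y | (qr : ℝ) < v' y} ↔ x ∈ A' ∩ {y | (qr : ℝ) < v' y}) := by
      rw [ae_all_iff]
      intro qr
      exact hmem_iff _ (hinv _ inter_subset_left
        (hA'meas.inter (measurableSet_lt measurable_const hv'meas)))
    filter_upwards [hA'iff, hQ] with x h1 h2 hxA
    have hsx : (π g).symm x ∈ A' := h1.2 hxA
    apply eq_of_forall_rat_lt_iff
    intro qr
    constructor
    · intro hlt
      exact ((h2 qr).1 ⟨hsx, hlt⟩).2
    · intro hlt
      exact ((h2 qr).2 ⟨hxA, hlt⟩).2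
  have hvv'symm : ∀ᵐ x ∂μ, v ((π g).symm x) = v' ((π g).symm x) := by
    have hNnull : μ (toMeasurable μ {x | v x ≠ v' x}) = 0 := by
      rw [measure_toMeasurable]
      exact ae_iff.mp hvv'
    have hNnull2 : μ ((π g⁻¹) ⁻¹' (toMeasurable μ {x | v x ≠ v' x})) = 0 :=
      null_preimage hns g⁻¹ hNnull
    filter_upwards [measure_eq_zero_iff_ae_notMem.mp hNnull2] with x hx
    by_contra hne
    apply hx
    have hsymm : (π g).symm x = (π g⁻¹) x := by rw [map_inv, Equiv.Perm.inv_def]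
    show (π g⁻¹) x ∈ toMeasurable μ {x | v x ≠ v' x}
    apply subset_toMeasurable
    rw [← hsymm]
    exact hne
  -- on A', the min is a.e. equal to v
  have hminv : ∀ᵐ x ∂μ, x ∈ A' → min (v x) (inducedLpAction μ π p g v x) = v x := by
    filter_upwards [hD, hvT, hvv'symm, hvv'] with x h1 h2 h3 h4 hxA
    have hval : inducedLpAction μ π p g v x = v x := by
      simp only [inducedLpAction]
      rw [h1 hxA, h3, h2 hxA, ← h4]
      simp [Real.one_rpow]
    rw [hval, min_self]
  -- norm estimates
  have hminnorm : eLpNorm (A'.indicator v) q μ ≤ ENNReal.ofReal ε := by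
    refine le_trans (eLpNorm_mono_ae ?_) hmin
    filter_upwards [hminv] with x hx
    by_cases hxA : x ∈ A'
    · have : A'.indicator v x = min (v x) (inducedLpAction μ π p g v x) := by
        rw [Set.indicator_of_mem hxA, hx hxA]
      rw [this]
    · rw [Set.indicator_of_notMem hxA]
      simp only [norm_zero]
      exact norm_nonneg _
  have hcompl : eLpNorm (A'ᶜ.indicator v) q μ ≤ ENNReal.ofReal ε := by
    refine le_trans (eLpNorm_mono_ae ?_) hwnorm
    filter_upwards [hv0, hvuw, hw0] with x h0 h1 h2
    by_cases hxA : x ∈ A'ᶜ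
    · rw [Set.indicator_of_mem hxA]
      have hu_zero : u x = 0 := Set.indicator_of_notMem (by simpa using hxA) _
      rw [hu_zero, zero_add] at h1
      rw [Real.norm_of_nonneg h0, Real.norm_of_nonneg h2]
      exact h1
    · rw [Set.indicator_of_notMem hxA]
      simp only [norm_zero]
      exact norm_nonneg _
  have htri : eLpNorm v q μ ≤ ENNReal.ofReal ε + ENNReal.ofReal ε := by
    have hdecomp : v = fun x => A'.indicator v x + A'ᶜ.indicator v x := by
      funext x
      rw [← Set.indicator_self_add_compl_apply A' v]
    calc eLpNorm v q μ
        = eLpNorm (fun x => A'.indicator v x + A'ᶜ.indicator v x) q μ := by rw [← hdecomp]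
      _ ≤ eLpNorm (A'.indicator v) q μ + eLpNorm (A'ᶜ.indicator v) q μ :=
          eLpNorm_add_le (hv.1.indicator hA'meas) (hv.1.indicator hA'meas.compl) hq1
      _ ≤ ENNReal.ofReal ε + ENNReal.ofReal ε := add_le_add hminnorm hcompl
  have hvr : (eLpNorm v q μ).toReal ≤ 2 * ε := by
    have h := ENNReal.toReal_mono
      (by exact ENNReal.add_ne_top.2 ⟨ENNReal.ofReal_ne_top, ENNReal.ofReal_ne_top⟩) htri
    rw [ENNReal.toReal_add ENNReal.ofReal_ne_top ENNReal.ofReal_ne_top,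
      ENNReal.toReal_ofReal hε.le] at h
    linarith
  have h10 : nr = 10 * ε := by rw [hεdef]; ring
  linarith [hlow, hvr]

end Backward

/-- characterisation of setwise freeness of a non-singular action of a
countable amenable group in purely Banach-lattice terms. -/
theorem setwiseFree_iff_approx [Group G] [Countable G] [MeasurableSpace X]
    (μ : Measure X) [SigmaFinite μ]
    (hamen : ∀ ε' : ℝ, 0 < ε' → ∀ K' : Finset G, ∃ H : Finset G, KInvariant K' ε' H)
    (p : ℝ) (hp : 1 ≤ p) (π : G →* Equiv.Perm X) (hns : NonSingularHom μ π) :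
    SetwiseFreeHom μ π ↔
      ∀ g : G, g ≠ 1 → ∀ u : X → ℝ, MemLp u (ENNReal.ofReal p) μ →
        (∀ᵐ x ∂μ, 0 ≤ u x) → ∀ ε : ℝ, 0 < ε →
        ∃ v w : X → ℝ, MemLp v (ENNReal.ofReal p) μ ∧ MemLp w (ENNReal.ofReal p) μ ∧
          (∀ᵐ x ∂μ, 0 ≤ v x) ∧ (∀ᵐ x ∂μ, 0 ≤ w x) ∧
          (∀ᵐ x ∂μ, v x ≤ u x + w x) ∧
          eLpNorm w (ENNReal.ofReal p) μ ≤ ENNReal.ofReal ε ∧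
          eLpNorm (fun x => min (v x) (inducedLpAction μ π p g v x)) (ENNReal.ofReal p) μ ≤
            ENNReal.ofReal ε ∧
          (1 / 3) * (eLpNorm u (ENNReal.ofReal p) μ).toReal - ε ≤
            (eLpNorm v (ENNReal.ofReal p) μ).toReal := by
  constructor
  · intro hsf g hg u hu hu0 ε hε
    exact forward_dir hns hp hsf g hg u hu hu0 ε hε
  · intro hmain
    exact backward_dir hns hp hmain
end
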